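/- arXiv:2111.12392 — 3 statements merged into one kernel-verified Lean document; each statement's English description precedes it below -/
import Mathlib

section
/- If C = (1, c₂, c₃, c₄, c₅, c₆) = (1, c₂, c₃, c₄, c₅, 2c₅ − c₂) is canonical and the subsystem (1, c₂, c₃, c₄, c₅) is noncanonical, then C = (1, 2, 3, c₄, c₄+1, 2c₄) with c₄ > 4. -/
open Finset

/-- `x` is a representation of value `v` in the coin system `c 1, …, c n`. -/
def IsRepr (n : ℕ) (c : ℕ → ℕ) (v : ℕ) (x : ℕ → ℕ) : Prop :=
  ∑ i ∈ Finset.Icc 1 n, c i * x i = v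

/-- Minimum number of coins over all representations of `v`. -/
noncomputable def opt (n : ℕ) (c : ℕ → ℕ) (v : ℕ) : ℕ :=
  sInf {k | ∃ x : ℕ → ℕ, IsRepr n c v x ∧ ∑ i ∈ Finset.Icc 1 n, x i = k}

/-- Number of coins used by the greedy algorithm to pay `v`. -/
def grd (n : ℕ) (c : ℕ → ℕ) (v : ℕ) : ℕ :=
  if hv : v = 0 then 0
  else
    let m := ((Finset.Icc 1 n).filter (fun i => c i ≤ v)).sup c
    if hm : 0 < m then grd n c (v - m) + 1 else 0
termination_by v
decreasing_by omega

/-- The system is canonical: greedy is optimal for every positive value. -/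
def Canonical (n : ℕ) (c : ℕ → ℕ) : Prop :=
  ∀ v, 0 < v → opt n c v = grd n c v

/-- `w` is a counterexample to the system. -/
def IsCex (n : ℕ) (c : ℕ → ℕ) (w : ℕ) : Prop :=
  0 < w ∧ opt n c w < grd n c w

/-- `w` is the minimum counterexample to the system. -/
def MinCex (n : ℕ) (c : ℕ → ℕ) (w : ℕ) : Prop :=
  IsCex n c w ∧ ∀ u, IsCex n c u → w ≤ u

/-- A (currency) system: first coin is `1` and coins strictly increase. -/
def IsSystem (n : ℕ) (c : ℕ → ℕ) : Prop :=
  c 1 = 1 ∧ StrictMonoOn c (Set.Icc 1 n)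

lemma grd_zero (n : ℕ) (c : ℕ → ℕ) : grd n c 0 = 0 := by rw [grd]; simp

lemma sup_eq_of (n : ℕ) (c : ℕ → ℕ) (v k : ℕ) (hk : k ∈ Finset.Icc 1 n) (hkv : c k ≤ v)
    (hmax : ∀ i ∈ Finset.Icc 1 n, c i ≤ v → c i ≤ c k) :
    ((Finset.Icc 1 n).filter (fun i => c i ≤ v)).sup c = c k := by
  apply le_antisymm
  · exact Finset.sup_le (fun i hi => by
      simp only [Finset.mem_filter] at hi; exact hmax i hi.1 hi.2)
  · exact Finset.le_sup (Finset.mem_filter.mpr ⟨hk, hkv⟩)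

lemma grd_step (n : ℕ) (c : ℕ → ℕ) (v k : ℕ) (hk : k ∈ Finset.Icc 1 n) (hck : 0 < c k)
    (hkv : c k ≤ v) (hmax : ∀ i ∈ Finset.Icc 1 n, c i ≤ v → c i ≤ c k) :
    grd n c v = grd n c (v - c k) + 1 := by
  have hv : v ≠ 0 := by omega
  rw [grd]
  simp only [hv, dif_neg, sup_eq_of n c v k hk hkv hmax]
  simp [hck]

lemma coin_pos (n : ℕ) (c : ℕ → ℕ) (h1 : c 1 = 1) (hmono : StrictMonoOn c (Set.Icc 1 n))
    {i : ℕ} (hi : i ∈ Finset.Icc 1 n) : 0 < c i := by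
  simp only [Finset.mem_Icc] at hi
  rcases eq_or_lt_of_le hi.1 with h | h
  · rw [← h, h1]; omega
  · have := hmono (Set.mem_Icc.mpr ⟨le_refl 1, le_trans hi.1 hi.2⟩)
      (Set.mem_Icc.mpr ⟨hi.1, hi.2⟩) h
    omega

lemma coin_mono (n : ℕ) (c : ℕ → ℕ) (hmono : StrictMonoOn c (Set.Icc 1 n))
    {i j : ℕ} (hi : 1 ≤ i) (hij : i ≤ j) (hj : j ≤ n) : c i ≤ c j := by
  rcases eq_or_lt_of_le hij with h | h
  · subst h; exact le_refl _
  · exact le_of_lt (hmono (Set.mem_Icc.mpr ⟨hi, le_trans hij hj⟩)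
      (Set.mem_Icc.mpr ⟨le_trans hi hij, hj⟩) h)

lemma grd_lt_c2 (n : ℕ) (c : ℕ → ℕ) (hn : 2 ≤ n) (h1 : c 1 = 1)
    (hmono : StrictMonoOn c (Set.Icc 1 n)) :
    ∀ v, v < c 2 → grd n c v = v := by
  intro v
  induction v using Nat.strong_induction_on with
  | _ v ih =>
    intro hv
    rcases Nat.eq_zero_or_pos v with h0 | h0
    · subst h0; exact grd_zero n c
    · have hstep := grd_step n c v 1 (by simp [Finset.mem_Icc]; omega) (by omega)
        (by omega) ?_
      · rw [hstep, h1, ih (v - 1) (by omega) (by omega)]; omega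
      · intro i hi hiv
        simp only [Finset.mem_Icc] at hi
        rcases Nat.lt_or_ge i 2 with h2 | h2
        · have : i = 1 := by omega
          subst this; omega
        · have : c 2 ≤ c i := coin_mono n c hmono (by omega) h2 hi.2
          omega

lemma grd_pos (n : ℕ) (c : ℕ → ℕ) (hn : 1 ≤ n) (h1 : c 1 = 1)
    {v : ℕ} (hv : 0 < v) : 0 < grd n c v := by
  have h1f : (1:ℕ) ∈ (Finset.Icc 1 n).filter (fun i => c i ≤ v) := by
    simp [Finset.mem_Icc]; omega
  have hsup : 0 < ((Finset.Icc 1 n).filter (fun i => c i ≤ v)).sup c := by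
    have := Finset.le_sup (f := c) h1f; omega
  rw [grd]
  simp only [Nat.pos_iff_ne_zero.mp hv, dif_neg]
  simp [hsup]

lemma grd_eq_one (n : ℕ) (c : ℕ → ℕ) (hn : 1 ≤ n) (h1 : c 1 = 1)
    {v : ℕ} (hv : 0 < v) (hg : grd n c v = 1) : ∃ k ∈ Finset.Icc 1 n, c k = v := by
  have h1f : (1:ℕ) ∈ (Finset.Icc 1 n).filter (fun i => c i ≤ v) := by
    simp [Finset.mem_Icc]; omega
  obtain ⟨k, hk, hck⟩ := Finset.exists_mem_eq_sup _ ⟨1, h1f⟩ c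
  simp only [Finset.mem_filter] at hk
  have hstep := grd_step n c v k hk.1 (by
      have := Finset.le_sup (f := c) h1f; omega) hk.2
    (fun i hi hiv => by
      rw [← hck]; exact Finset.le_sup (Finset.mem_filter.mpr ⟨hi, hiv⟩))
  rw [hstep] at hg
  have : grd n c (v - c k) = 0 := by omega
  have hvk : v - c k = 0 := by
    by_contra h
    have := grd_pos n c hn h1 (v := v - c k) (by omega)
    omega
  exact ⟨k, hk.1, by omega⟩

lemma isrepr_single (n : ℕ) (c : ℕ → ℕ) {k : ℕ} (hk : k ∈ Finset.Icc 1 n) :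
    IsRepr n c (c k) (fun i => if i = k then 1 else 0) := by
  unfold IsRepr
  simp only [mul_ite, mul_one, mul_zero]
  rw [Finset.sum_ite_eq' _ k c]
  simp [hk]

lemma sum_single (n : ℕ) {k : ℕ} (hk : k ∈ Finset.Icc 1 n) :
    ∑ i ∈ Finset.Icc 1 n, (fun i => if i = k then (1:ℕ) else 0) i = 1 := by
  rw [Finset.sum_ite_eq' _ k (fun _ => (1:ℕ))]
  simp [hk]

lemma optset_nonempty (n : ℕ) (c : ℕ → ℕ) (hn : 1 ≤ n) (h1 : c 1 = 1) (v : ℕ) :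
    {k | ∃ x : ℕ → ℕ, IsRepr n c v x ∧ ∑ i ∈ Finset.Icc 1 n, x i = k}.Nonempty := by
  refine ⟨_, ⟨fun i => if i = 1 then v else 0, ?_, rfl⟩⟩
  unfold IsRepr
  simp only [mul_ite, mul_zero]
  rw [Finset.sum_ite_eq' _ 1 (fun i => c i * v)]
  simp [Finset.mem_Icc, hn, h1]

lemma opt_le_sum (n : ℕ) (c : ℕ → ℕ) {v : ℕ} {x : ℕ → ℕ} (hx : IsRepr n c v x) :
    opt n c v ≤ ∑ i ∈ Finset.Icc 1 n, x i :=
  Nat.sInf_le ⟨x, hx, rfl⟩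

lemma opt_spec (n : ℕ) (c : ℕ → ℕ) (hn : 1 ≤ n) (h1 : c 1 = 1) (v : ℕ) :
    ∃ x : ℕ → ℕ, IsRepr n c v x ∧ ∑ i ∈ Finset.Icc 1 n, x i = opt n c v :=
  Nat.sInf_mem (optset_nonempty n c hn h1 v)

lemma repr_grd (n : ℕ) (c : ℕ → ℕ) (hn : 1 ≤ n) (h1 : c 1 = 1) :
    ∀ v, ∃ x : ℕ → ℕ, IsRepr n c v x ∧ ∑ i ∈ Finset.Icc 1 n, x i = grd n c v := by
  intro v
  induction v using Nat.strong_induction_on with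
  | _ v ih =>
    rcases Nat.eq_zero_or_pos v with h0 | h0
    · subst h0
      exact ⟨fun _ => 0, by unfold IsRepr; simp, by simp [grd_zero]⟩
    · have h1f : (1:ℕ) ∈ (Finset.Icc 1 n).filter (fun i => c i ≤ v) := by
        simp [Finset.mem_Icc]; omega
      obtain ⟨k, hk, hck⟩ := Finset.exists_mem_eq_sup _ ⟨1, h1f⟩ c
      simp only [Finset.mem_filter] at hk
      have hckpos : 0 < c k := by have := Finset.le_sup (f := c) h1f; omega
      have hstep := grd_step n c v k hk.1 hckpos hk.2
        (fun i hi hiv => by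
          rw [← hck]; exact Finset.le_sup (Finset.mem_filter.mpr ⟨hi, hiv⟩))
      obtain ⟨x, hx, hxs⟩ := ih (v - c k) (by omega)
      refine ⟨fun i => x i + (if i = k then 1 else 0), ?_, ?_⟩
      · unfold IsRepr at hx ⊢
        simp only [mul_add, Finset.sum_add_distrib]
        rw [hx]
        simp only [mul_ite, mul_one, mul_zero]
        rw [Finset.sum_ite_eq' _ k c]
        simp [hk.1]
        omega
      · rw [Finset.sum_add_distrib, hxs, hstep]
        rw [Finset.sum_ite_eq' _ k (fun _ => (1:ℕ))]
        simp [hk.1]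

lemma opt_le_grd (n : ℕ) (c : ℕ → ℕ) (hn : 1 ≤ n) (h1 : c 1 = 1) (v : ℕ) :
    opt n c v ≤ grd n c v := by
  obtain ⟨x, hx, hxs⟩ := repr_grd n c hn h1 v
  have := opt_le_sum n c hx
  omega

lemma opt_subadd (n : ℕ) (c : ℕ → ℕ) (hn : 1 ≤ n) (h1 : c 1 = 1) (a b : ℕ) :
    opt n c (a + b) ≤ opt n c a + opt n c b := by
  obtain ⟨x, hx, hxs⟩ := opt_spec n c hn h1 a
  obtain ⟨y, hy, hys⟩ := opt_spec n c hn h1 b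
  have hrep : IsRepr n c (a + b) (fun i => x i + y i) := by
    unfold IsRepr at hx hy ⊢
    simp only [mul_add, Finset.sum_add_distrib, hx, hy]
  have := opt_le_sum n c hrep
  simp only [Finset.sum_add_distrib] at this
  omega

lemma opt_coin (n : ℕ) (c : ℕ → ℕ) {k : ℕ} (hk : k ∈ Finset.Icc 1 n) :
    opt n c (c k) ≤ 1 := by
  have := opt_le_sum n c (isrepr_single n c hk)
  rw [sum_single n hk] at this
  exact this

lemma opt_pos (n : ℕ) (c : ℕ → ℕ) (hn : 1 ≤ n) (h1 : c 1 = 1) {v : ℕ} (hv : 0 < v) :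
    1 ≤ opt n c v := by
  obtain ⟨x, hx, hxs⟩ := opt_spec n c hn h1 v
  by_contra h
  have hs : ∑ i ∈ Finset.Icc 1 n, x i = 0 := by omega
  have : ∀ i ∈ Finset.Icc 1 n, x i = 0 := by
    intro i hi
    exact (Finset.sum_eq_zero_iff.mp hs) i hi
  unfold IsRepr at hx
  rw [Finset.sum_congr rfl (fun i hi => by rw [this i hi, mul_zero])] at hx
  simp at hx
  omega

lemma opt_ge_two (n : ℕ) (c : ℕ → ℕ) (hn : 1 ≤ n) (h1 : c 1 = 1)
    (hmono : StrictMonoOn c (Set.Icc 1 n)) {v : ℕ} (hv : c n < v) :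
    2 ≤ opt n c v := by
  obtain ⟨x, hx, hxs⟩ := opt_spec n c hn h1 v
  by_contra h
  have hle : ∑ i ∈ Finset.Icc 1 n, x i ≤ 1 := by omega
  unfold IsRepr at hx
  have hb : v ≤ c n * ∑ i ∈ Finset.Icc 1 n, x i := by
    rw [← hx, Finset.mul_sum]
    apply Finset.sum_le_sum
    intro i hi
    have : c i ≤ c n := coin_mono n c hmono (Finset.mem_Icc.mp hi).1
      (Finset.mem_Icc.mp hi).2 (le_refl n)
    exact Nat.mul_le_mul_right _ this
  have : c n * ∑ i ∈ Finset.Icc 1 n, x i ≤ c n * 1 := Nat.mul_le_mul_left _ hle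
  omega

lemma opt_remove (n : ℕ) (c : ℕ → ℕ) {v : ℕ} {x : ℕ → ℕ} (hx : IsRepr n c v x)
    {k : ℕ} (hk : k ∈ Finset.Icc 1 n) (hxk : 1 ≤ x k) :
    opt n c (v - c k) + 1 ≤ ∑ i ∈ Finset.Icc 1 n, x i := by
  set y : ℕ → ℕ := fun i => x i - (if i = k then 1 else 0) with hy
  have hxy : ∀ i, x i = y i + (if i = k then 1 else 0) := by
    intro i
    by_cases h : i = k <;> simp [hy, h] <;> omega
  have hckv : c k ≤ v := by
    unfold IsRepr at hx
    calc c k = c k * 1 := by ring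
    _ ≤ c k * x k := Nat.mul_le_mul_left _ hxk
    _ ≤ ∑ i ∈ Finset.Icc 1 n, c i * x i := Finset.single_le_sum
        (f := fun i => c i * x i) (fun i _ => Nat.zero_le _) hk
    _ = v := hx
  have hrep : IsRepr n c (v - c k) y := by
    unfold IsRepr at hx ⊢
    have : ∑ i ∈ Finset.Icc 1 n, c i * x i
        = ∑ i ∈ Finset.Icc 1 n, c i * y i + c k := by
      rw [Finset.sum_congr rfl (fun i _ => by rw [hxy i, mul_add])]
      rw [Finset.sum_add_distrib]
      congr 1
      simp only [mul_ite, mul_one, mul_zero]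
      rw [Finset.sum_ite_eq' _ k c]
      simp [hk]
    omega
  have h1 := opt_le_sum n c hrep
  have hsum : ∑ i ∈ Finset.Icc 1 n, x i = ∑ i ∈ Finset.Icc 1 n, y i + 1 := by
    rw [Finset.sum_congr rfl (fun i _ => hxy i), Finset.sum_add_distrib]
    rw [Finset.sum_ite_eq' _ k (fun _ => (1:ℕ))]
    simp [hk]
  omega

lemma opt6_le_opt5 (c : ℕ → ℕ) (h1 : c 1 = 1) (v : ℕ) :
    opt 6 c v ≤ opt 5 c v := by
  obtain ⟨x, hx, hxs⟩ := opt_spec 5 c (by norm_num) h1 v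
  set y : ℕ → ℕ := fun i => if i = 6 then 0 else x i with hy
  have hrep : IsRepr 6 c v y := by
    unfold IsRepr at hx ⊢
    rw [Finset.sum_Icc_succ_top (by norm_num : 1 ≤ 6)]
    have : ∑ i ∈ Finset.Icc 1 5, c i * y i = ∑ i ∈ Finset.Icc 1 5, c i * x i := by
      apply Finset.sum_congr rfl
      intro i hi
      have : i ≠ 6 := by simp [Finset.mem_Icc] at hi; omega
      simp [hy, this]
    have hy6 : y 6 = 0 := by simp [hy]
    rw [hy6, mul_zero, add_zero, this, hx]
  have h := opt_le_sum 6 c hrep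
  have hsum : ∑ i ∈ Finset.Icc 1 6, y i = ∑ i ∈ Finset.Icc 1 5, x i := by
    rw [Finset.sum_Icc_succ_top (by norm_num : 1 ≤ 6)]
    have : ∑ i ∈ Finset.Icc 1 5, y i = ∑ i ∈ Finset.Icc 1 5, x i := by
      apply Finset.sum_congr rfl
      intro i hi
      have : i ≠ 6 := by simp [Finset.mem_Icc] at hi; omega
      simp [hy, this]
    have hy6 : y 6 = 0 := by simp [hy]
    rw [hy6, add_zero, this]
  omega

lemma grd65 (c : ℕ → ℕ) (h1 : c 1 = 1) :
    ∀ v, v < c 6 → grd 6 c v = grd 5 c v := by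
  intro v
  induction v using Nat.strong_induction_on with
  | _ v ih =>
    intro hv
    rcases Nat.eq_zero_or_pos v with h0 | h0
    · subst h0; rw [grd_zero, grd_zero]
    · have h1f5 : (1:ℕ) ∈ (Finset.Icc 1 5).filter (fun i => c i ≤ v) := by
        simp [Finset.mem_Icc]; omega
      have hsup : ((Finset.Icc 1 6).filter (fun i => c i ≤ v)).sup c
          = ((Finset.Icc 1 5).filter (fun i => c i ≤ v)).sup c := by
        apply le_antisymm
        · apply Finset.sup_le
          intro i hi
          simp only [Finset.mem_filter, Finset.mem_Icc] at hi
          have hi5 : i ≤ 5 := by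
            by_contra h
            have : i = 6 := by omega
            subst this; omega
          exact Finset.le_sup (Finset.mem_filter.mpr
            ⟨Finset.mem_Icc.mpr ⟨hi.1.1, hi5⟩, hi.2⟩)
        · apply Finset.sup_le
          intro i hi
          simp only [Finset.mem_filter, Finset.mem_Icc] at hi
          exact Finset.le_sup (Finset.mem_filter.mpr
            ⟨Finset.mem_Icc.mpr ⟨hi.1.1, by omega⟩, hi.2⟩)
      have hpos : 0 < ((Finset.Icc 1 5).filter (fun i => c i ≤ v)).sup c := by
        have := Finset.le_sup (f := c) h1f5; omega
      have hle : ((Finset.Icc 1 5).filter (fun i => c i ≤ v)).sup c ≤ v := by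
        apply Finset.sup_le
        intro i hi
        exact (Finset.mem_filter.mp hi).2
      conv_lhs => rw [grd]
      conv_rhs => rw [grd]
      simp only [Nat.pos_iff_ne_zero.mp h0, dif_neg, hsup]
      simp only [hpos, dif_pos]
      rw [ih _ (by omega) (by omega)]

lemma grd_top5 (c : ℕ → ℕ) (h1 : c 1 = 1) (hmono : StrictMonoOn c (Set.Icc 1 5))
    {v : ℕ} (hv : c 5 ≤ v) : grd 5 c v = grd 5 c (v - c 5) + 1 := by
  apply grd_step 5 c v 5 (by simp) (coin_pos 5 c h1 hmono (by simp)) hv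
  intro i hi _
  exact coin_mono 5 c hmono (Finset.mem_Icc.mp hi).1 (Finset.mem_Icc.mp hi).2 (le_refl 5)

/-- Kozen–Zaks-style bound: a minimal counterexample of the 5-system is `< c 4 + c 5`. -/
lemma minw_lt (c : ℕ → ℕ) (h1 : c 1 = 1) (hmono : StrictMonoOn c (Set.Icc 1 5))
    (w : ℕ) (hcex : IsCex 5 c w) (hmin : ∀ u, IsCex 5 c u → w ≤ u) :
    w < c 4 + c 5 := by
  by_contra hcon
  push_neg at hcon
  have hc4 : 0 < c 4 := coin_pos 5 c h1 hmono (by simp)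
  have hc5 : 0 < c 5 := coin_pos 5 c h1 hmono (by simp)
  have hc45 : c 4 < c 5 := hmono (by simp) (by simp) (by omega)
  -- equality of opt and grd below w
  have heq : ∀ u, u < w → opt 5 c u = grd 5 c u := by
    intro u hu
    rcases Nat.eq_zero_or_pos u with h0 | h0
    · subst h0
      have : opt 5 c 0 ≤ 0 := opt_le_sum 5 c (x := fun _ => 0)
        (by unfold IsRepr; simp)
      rw [grd_zero]; omega
    · have hnc : ¬ IsCex 5 c u := fun h => by have := hmin u h; omega
      unfold IsCex at hnc
      push_neg at hnc
      have := opt_le_grd 5 c (by norm_num) h1 u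
      have := hnc h0
      omega
  obtain ⟨x, hx, hxs⟩ := opt_spec 5 c (by norm_num) h1 w
  have hwpos := hcex.1
  have hops : 1 ≤ opt 5 c w := opt_pos 5 c (by norm_num) h1 hwpos
  -- there's a coin in the optimal representation
  have hex : ∃ j ∈ Finset.Icc 1 5, 0 < x j := by
    by_contra h
    push_neg at h
    have : ∑ i ∈ Finset.Icc 1 5, x i = 0 :=
      Finset.sum_eq_zero (fun i hi => by have := h i hi; omega)
    omega
  -- generic removal argument
  have key : ∀ j ∈ Finset.Icc 1 5, 0 < x j → opt 5 c w = opt 5 c (w - c j) + 1 := by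
    intro j hj hxj
    have h1' : opt 5 c (w - c j) + 1 ≤ opt 5 c w := by
      have := opt_remove 5 c hx hj hxj; omega
    have h2' : opt 5 c w ≤ opt 5 c (w - c j) + 1 := by
      have hcjw : c j ≤ w := by
        have : c j ≤ c 5 := coin_mono 5 c hmono (Finset.mem_Icc.mp hj).1
          (Finset.mem_Icc.mp hj).2 (le_refl 5)
        omega
      have := opt_subadd 5 c (by norm_num) h1 (w - c j) (c j)
      have hco := opt_coin 5 c hj
      have heqn : w - c j + c j = w := by omega
      rw [heqn] at this
      omega
    omega
  by_cases h5 : 0 < x 5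
  · have hk := key 5 (by simp) h5
    have he : opt 5 c (w - c 5) = grd 5 c (w - c 5) := heq _ (by omega)
    have hg := grd_top5 c h1 hmono (v := w) (by omega)
    have := hcex.2
    omega
  · obtain ⟨j, hj, hxj⟩ := hex
    have hj5 : j ≠ 5 := fun h => by subst h; omega
    have hjm := Finset.mem_Icc.mp hj
    have hcj4 : c j ≤ c 4 := coin_mono 5 c hmono hjm.1 (by omega) (by norm_num)
    have hcjpos : 0 < c j := coin_pos 5 c h1 hmono hj
    -- w = c 5 + c j + r
    obtain ⟨r, hr⟩ : ∃ r, w = c 5 + c j + r := ⟨w - c 5 - c j, by omega⟩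
    have e1 : w - c j = c 5 + r := by omega
    have e2 : w - c 5 = c j + r := by omega
    have hk := key j hj hxj
    rw [e1] at hk
    -- opt w = grd r + 2
    have hg1 : grd 5 c (c 5 + r) = grd 5 c r + 1 := by
      have := grd_top5 c h1 hmono (v := c 5 + r) (by omega)
      simpa using this
    have he1 : opt 5 c (c 5 + r) = grd 5 c (c 5 + r) := heq _ (by omega)
    -- grd w ≤ opt w
    have hg2 : grd 5 c w = grd 5 c (c j + r) + 1 := by
      have := grd_top5 c h1 hmono (v := w) (by omega)
      rw [e2] at this; exact this
    have he2 : opt 5 c (c j + r) = grd 5 c (c j + r) := heq _ (by omega)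
    have hsub : opt 5 c (c j + r) ≤ opt 5 c r + 1 := by
      have := opt_subadd 5 c (by norm_num) h1 r (c j)
      have hco := opt_coin 5 c hj
      have : opt 5 c (r + c j) ≤ opt 5 c r + 1 := by omega
      rwa [Nat.add_comm r (c j)] at this
    have hrle : opt 5 c r ≤ grd 5 c r := opt_le_grd 5 c (by norm_num) h1 r
    have : grd 5 c w ≤ opt 5 c w := by omega
    exact absurd hcex.2 (by omega)

lemma sum_Icc15 (f : ℕ → ℕ) : ∑ i ∈ Finset.Icc 1 5, f i = f 1 + f 2 + f 3 + f 4 + f 5 := by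
  have h : Finset.Icc (1:ℕ) 5 = {1,2,3,4,5} := by decide
  rw [h]
  simp [Finset.sum_insert, Finset.mem_insert]
  ring

theorem case_two_c5_sub_c2 (c : ℕ → ℕ) (hsys : IsSystem 6 c)
    (h6 : c 6 = 2 * c 5 - c 2)
    (hC : Canonical 6 c) (hC' : ¬ Canonical 5 c) :
    c 2 = 2 ∧ c 3 = 3 ∧ c 5 = c 4 + 1 ∧ c 6 = 2 * c 4 ∧ 4 < c 4 := by
  obtain ⟨h1, hmono⟩ := hsys
  have hmono5 : StrictMonoOn c (Set.Icc 1 5) :=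
    hmono.mono (Set.Icc_subset_Icc_right (by norm_num))
  have mem6 : ∀ i : ℕ, 1 ≤ i → i ≤ 6 → i ∈ Set.Icc 1 6 := fun i h h' => Set.mem_Icc.mpr ⟨h, h'⟩
  have l12 : c 1 < c 2 := hmono (mem6 1 (by norm_num) (by norm_num)) (mem6 2 (by norm_num) (by norm_num)) (by norm_num)
  have l23 : c 2 < c 3 := hmono (mem6 2 (by norm_num) (by norm_num)) (mem6 3 (by norm_num) (by norm_num)) (by norm_num)
  have l34 : c 3 < c 4 := hmono (mem6 3 (by norm_num) (by norm_num)) (mem6 4 (by norm_num) (by norm_num)) (by norm_num)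
  have l45 : c 4 < c 5 := hmono (mem6 4 (by norm_num) (by norm_num)) (mem6 5 (by norm_num) (by norm_num)) (by norm_num)
  have l56 : c 5 < c 6 := hmono (mem6 5 (by norm_num) (by norm_num)) (mem6 6 (by norm_num) (by norm_num)) (by norm_num)
  have h6' : c 6 + c 2 = 2 * c 5 := by omega
  -- minimal counterexample of the 5-system
  have hCexNe : {u | IsCex 5 c u}.Nonempty := by
    unfold Canonical at hC'
    push_neg at hC'
    obtain ⟨v, hv, hne⟩ := hC'
    exact ⟨v, hv, lt_of_le_of_ne (opt_le_grd 5 c (by norm_num) h1 v) hne⟩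
  set W := sInf {u | IsCex 5 c u} with hWdef
  have hWcex : IsCex 5 c W := Nat.sInf_mem hCexNe
  have hWmin : ∀ u, IsCex 5 c u → W ≤ u := fun u hu => Nat.sInf_le hu
  -- W ≥ c 6
  have hW1 : c 6 ≤ W := by
    by_contra h
    push_neg at h
    have hg := grd65 c h1 W h
    have ho := opt6_le_opt5 c h1 W
    have hcan := hC W hWcex.1
    have := hWcex.2
    omega
  have hW2 : W < c 4 + c 5 := minw_lt c h1 hmono5 W hWcex hWmin
  -- step 5 : c 5 + 1 = c 4 + c 2
  have hgs : grd 6 c (c 4 + c 5) = grd 6 c (c 4 + c 5 - c 6) + 1 := by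
    apply grd_step 6 c _ 6 (by simp) (by omega) (by omega)
    intro i hi _
    exact coin_mono 6 c hmono (Finset.mem_Icc.mp hi).1 (Finset.mem_Icc.mp hi).2 (le_refl 6)
  have hgsmall : grd 6 c (c 4 + c 5 - c 6) = c 4 + c 5 - c 6 :=
    grd_lt_c2 6 c (by norm_num) h1 hmono _ (by omega)
  have hopt2 : opt 6 c (c 4 + c 5) ≤ 2 := by
    have hs := opt_subadd 6 c (by norm_num) h1 (c 4) (c 5)
    have h4 := opt_coin 6 c (k := 4) (by simp)
    have h5 := opt_coin 6 c (k := 5) (by simp)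
    omega
  have hcan45 := hC (c 4 + c 5) (by omega)
  have e5 : c 5 + 1 = c 4 + c 2 := by omega
  have e45 : c 6 + 1 = c 4 + c 5 := by omega
  have hWe : W = c 6 := by omega
  -- step 7 : c 3 + 2 ≤ c 4
  have hgW : grd 5 c W = grd 5 c (W - c 5) + 1 := grd_top5 c h1 hmono5 (by omega)
  have hWg2 : 2 ≤ opt 5 c W := opt_ge_two 5 c (by norm_num) h1 hmono5 (by omega)
  have hgw3 : 3 ≤ grd 5 c W := by have := hWcex.2; omega
  have e7 : c 3 + 2 ≤ c 4 := by
    by_contra h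
    push_neg at h
    have h34 : c 3 + 1 = c 4 := by omega
    have hWc3 : W - c 5 = c 3 := by omega
    rw [hWc3] at hgW
    have hone : grd 5 c (c 3) = grd 5 c (c 3 - c 3) + 1 :=
      grd_step 5 c (c 3) 3 (by simp) (by omega) (le_refl _) (fun i _ hle => hle)
    simp only [Nat.sub_self, grd_zero] at hone
    omega
  -- step 8 : 2 * c 2 = c 3 + 1
  have e3 : 2 * c 2 = c 3 + 1 := by
    have hg34 : grd 6 c (c 3 + c 4) = grd 6 c (c 3 + c 4 - c 5) + 1 := by
      apply grd_step 6 c _ 5 (by simp) (by omega) (by omega)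
      intro i hi hle
      simp only [Finset.mem_Icc] at hi
      obtain ⟨hi1, hi2⟩ := hi
      interval_cases i <;> omega
    have hopt34 : opt 6 c (c 3 + c 4) ≤ 2 := by
      have hs := opt_subadd 6 c (by norm_num) h1 (c 3) (c 4)
      have h3 := opt_coin 6 c (k := 3) (by simp)
      have h4 := opt_coin 6 c (k := 4) (by simp)
      omega
    have hcan34 := hC (c 3 + c 4) (by omega)
    have hpos34 : 0 < grd 6 c (c 3 + c 4 - c 5) :=
      grd_pos 6 c (by norm_num) h1 (by omega)
    have hone : grd 6 c (c 3 + c 4 - c 5) = 1 := by omega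
    obtain ⟨k, hk, hck⟩ := grd_eq_one 6 c (by norm_num) h1 (by omega) hone
    simp only [Finset.mem_Icc] at hk
    obtain ⟨hk1, hk2⟩ := hk
    interval_cases k <;> omega
  by_cases hc22 : c 2 = 2
  · exact ⟨hc22, by omega, by omega, by omega, by omega⟩
  · exfalso
    have hc23 : 3 ≤ c 2 := by omega
    -- step 9 : c 4 + 1 = c 3 + c 2
    have e4 : c 4 + 1 = c 3 + c 2 := by
      have hg44 : grd 6 c (2 * c 4) = grd 6 c (2 * c 4 - c 5) + 1 := by
        apply grd_step 6 c _ 5 (by simp) (by omega) (by omega)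
        intro i hi hle
        simp only [Finset.mem_Icc] at hi
        obtain ⟨hi1, hi2⟩ := hi
        interval_cases i <;> omega
      have hopt44 : opt 6 c (2 * c 4) ≤ 2 := by
        have hs := opt_subadd 6 c (by norm_num) h1 (c 4) (c 4)
        have h4 := opt_coin 6 c (k := 4) (by simp)
        have : 2 * c 4 = c 4 + c 4 := by ring
        rw [this]
        omega
      have hcan44 := hC (2 * c 4) (by omega)
      have hpos44 : 0 < grd 6 c (2 * c 4 - c 5) :=
        grd_pos 6 c (by norm_num) h1 (by omega)
      have hone : grd 6 c (2 * c 4 - c 5) = 1 := by omega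
      obtain ⟨k, hk, hck⟩ := grd_eq_one 6 c (by norm_num) h1 (by omega) hone
      simp only [Finset.mem_Icc] at hk
      obtain ⟨hk1, hk2⟩ := hk
      interval_cases k <;> omega
    -- step 10 : compute grd 5 c W = c 2 and contradiction
    have hga : grd 5 c W = grd 5 c (W - c 5) + 1 := hgW
    have hgb : grd 5 c (W - c 5) = grd 5 c (W - c 5 - c 3) + 1 := by
      apply grd_step 5 c _ 3 (by simp) (by omega) (by omega)
      intro i hi hle
      simp only [Finset.mem_Icc] at hi
      obtain ⟨hi1, hi2⟩ := hi
      interval_cases i <;> omega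
    have hgc : grd 5 c (W - c 5 - c 3) = W - c 5 - c 3 :=
      grd_lt_c2 5 c (by norm_num) h1 hmono5 _ (by omega)
    have hgWc2 : grd 5 c W = c 2 := by omega
    have hoptW : opt 5 c W < c 2 := by have := hWcex.2; omega
    obtain ⟨x, hx, hxs⟩ := opt_spec 5 c (by norm_num) h1 W
    unfold IsRepr at hx
    rw [sum_Icc15] at hx hxs
    obtain ⟨d, hd⟩ : ∃ d, c 2 = d + 1 := ⟨c 2 - 1, by omega⟩
    have hd2 : 2 ≤ d := by omega
    have hd3 : c 3 = 2 * d + 1 := by omega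
    have hd4 : c 4 = 3 * d + 1 := by omega
    have hd5 : c 5 = 4 * d + 1 := by omega
    have hdW : W = 7 * d + 1 := by omega
    rw [h1, hd, hd3, hd4, hd5, hdW] at hx
    have key : (x 1 + x 2 + x 3 + x 4 + x 5) + d * (x 2 + 2 * x 3 + 3 * x 4 + 4 * x 5)
        = 7 * d + 1 := by rw [← hx]; ring
    rcases le_or_gt (x 2 + 2 * x 3 + 3 * x 4 + 4 * x 5) 6 with h | h
    · have := Nat.mul_le_mul_left d h
      omega
    · have : d * 7 ≤ d * (x 2 + 2 * x 3 + 3 * x 4 + 4 * x 5) := Nat.mul_le_mul_left d h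
      omega
end

section
/- Let C = (1, 2, 3, c₄, c₄+1, 2c₄) with c₄ > 4. Then C is canonical and the subsystem C' = (1, 2, 3, c₄, c₄+1) is noncanonical; in particular, 2c₄ is a counterexample to C'. -/
open Finset

/-- Optimal count for values below `2*c4`. -/
def gsm (c4 r : ℕ) : ℕ := if r < c4 then (r + 2) / 3 else (r - c4 + 1) / 3 + 1

/-- Closed form for greedy/optimal count in system (1,2,3,c4,c4+1,2c4). -/
def Gfun (c4 v : ℕ) : ℕ := v / (2 * c4) + gsm c4 (v % (2 * c4))

private lemma dm_helper (m a q r : ℕ) (hm : 0 < m) (h : a = m * q + r) (hr : r < m) :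
    a / m = q ∧ a % m = r := by
  subst h
  constructor
  · rw [show m * q + r = r + q * m by ring, Nat.add_mul_div_right _ _ hm,
      Nat.div_eq_of_lt hr, Nat.zero_add]
  · rw [show m * q + r = r + q * m by ring, Nat.add_mul_mod_self_right,
      Nat.mod_eq_of_lt hr]

section Family

variable (c : ℕ → ℕ) (c4 : ℕ)

/-- The exchange inequality for the closed form. -/
private lemma Gfun_exch (hc4 : 4 < c4) (d v : ℕ)
    (hd : d = 1 ∨ d = 2 ∨ d = 3 ∨ d = c4 ∨ d = c4 + 1 ∨ d = 2 * c4) (hdv : d ≤ v) :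
    Gfun c4 v ≤ Gfun c4 (v - d) + 1 := by
  have hm : 0 < 2 * c4 := by omega
  have hv := (Nat.div_add_mod v (2 * c4)).symm
  set q := v / (2 * c4) with hq
  set r := v % (2 * c4) with hrdef
  have hr : r < 2 * c4 := Nat.mod_lt _ hm
  have hdle : d ≤ 2 * c4 := by omega
  rcases le_or_gt d r with hcase | hcase
  · -- d ≤ r : quotient unchanged
    have key : (v - d) / (2 * c4) = q ∧ (v - d) % (2 * c4) = r - d := by
      apply dm_helper _ _ _ _ hm
      · have : v = 2 * c4 * q + r := hv
        omega
      · omega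
    unfold Gfun
    rw [key.1, key.2, ← hq, ← hrdef]
    have : gsm c4 r ≤ gsm c4 (r - d) + 1 := by
      unfold gsm; split_ifs <;> omega
    omega
  · -- r < d : quotient drops by one
    rcases Nat.eq_zero_or_pos q with hq0 | hqpos
    · exfalso
      have : v = 2 * c4 * q + r := hv
      rw [hq0, Nat.mul_zero, Nat.zero_add] at this
      omega
    obtain ⟨k, hk⟩ : ∃ k, q = k + 1 := ⟨q - 1, by omega⟩
    have hvk : v = 2 * c4 * k + (2 * c4 + r) := by
      have : v = 2 * c4 * q + r := hv
      rw [hk, Nat.mul_succ] at this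
      omega
    have key : (v - d) / (2 * c4) = k ∧ (v - d) % (2 * c4) = 2 * c4 + r - d := by
      apply dm_helper _ _ _ _ hm
      · omega
      · omega
    unfold Gfun
    rw [key.1, key.2, ← hq, ← hrdef, hk]
    have : gsm c4 r ≤ gsm c4 (2 * c4 + r - d) := by
      unfold gsm; split_ifs <;> omega
    omega

variable (hc4 : 4 < c4)
  (h1 : c 1 = 1) (h2 : c 2 = 2) (h3 : c 3 = 3) (h4 : c 4 = c4)
  (h5 : c 5 = c4 + 1) (h6 : c 6 = 2 * c4)

include hc4 h1 h2 h3 h4 h5 h6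

private lemma sup_eq (v j : ℕ) (hj1 : 1 ≤ j) (hj6 : j ≤ 6) (hcj : c j ≤ v)
    (hmax : ∀ i, 1 ≤ i → i ≤ 6 → c i ≤ v → c i ≤ c j) :
    ((Finset.Icc 1 6).filter (fun i => c i ≤ v)).sup c = c j := by
  apply le_antisymm
  · apply Finset.sup_le
    intro i hi
    simp only [Finset.mem_filter, Finset.mem_Icc] at hi
    exact hmax i hi.1.1 hi.1.2 hi.2
  · apply Finset.le_sup (f := c)
    simp only [Finset.mem_filter, Finset.mem_Icc]
    exact ⟨⟨hj1, hj6⟩, hcj⟩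

private lemma grd_eq : ∀ v, grd 6 c v = Gfun c4 v := by
  intro v
  induction v using Nat.strong_induction_on with
  | _ v IH =>
  have hm2 : 0 < 2 * c4 := by omega
  by_cases hv0 : v = 0
  · subst hv0
    rw [grd]
    unfold Gfun gsm
    norm_num
    omega
  · -- v > 0; case analysis on the greedy coin
    have hlow : ∀ w, w < 2 * c4 → Gfun c4 w = gsm c4 w := by
      intro w hw
      unfold Gfun
      rw [Nat.div_eq_of_lt hw, Nat.mod_eq_of_lt hw, Nat.zero_add]
    rcases (show v = 1 ∨ v = 2 ∨ (3 ≤ v ∧ v < c4) ∨ v = c4 ∨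
        (c4 + 1 ≤ v ∧ v < 2 * c4) ∨ 2 * c4 ≤ v by omega) with hc | hc | hc | hc | hc | hc
    · -- v = 1, coin 1
      subst hc
      rw [grd, dif_neg hv0,
        sup_eq c c4 hc4 h1 h2 h3 h4 h5 h6 1 1 (by omega) (by omega) (by omega)
          (by intro i hi1 hi6; interval_cases i <;> omega)]
      rw [dif_pos (by omega), h1]
      rw [IH 0 (by omega)]
      rw [hlow 1 (by omega), hlow 0 (by omega)]
      unfold gsm
      split_ifs <;> omega
    · -- v = 2, coin 2
      subst hc
      rw [grd, dif_neg hv0,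
        sup_eq c c4 hc4 h1 h2 h3 h4 h5 h6 2 2 (by omega) (by omega) (by omega)
          (by intro i hi1 hi6; interval_cases i <;> omega)]
      rw [dif_pos (by omega), h2]
      rw [IH 0 (by omega)]
      rw [hlow 2 (by omega), hlow 0 (by omega)]
      unfold gsm
      split_ifs <;> omega
    · -- 3 ≤ v < c4, coin 3
      rw [grd, dif_neg hv0,
        sup_eq c c4 hc4 h1 h2 h3 h4 h5 h6 v 3 (by omega) (by omega) (by omega)
          (by intro i hi1 hi6; interval_cases i <;> omega)]
      rw [dif_pos (by omega), h3]
      rw [IH (v - 3) (by omega)]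
      rw [hlow v (by omega), hlow (v - 3) (by omega)]
      unfold gsm
      split_ifs <;> omega
    · -- v = c4, coin c4
      rw [grd, dif_neg hv0,
        sup_eq c c4 hc4 h1 h2 h3 h4 h5 h6 v 4 (by omega) (by omega) (by omega)
          (by intro i hi1 hi6; interval_cases i <;> omega)]
      rw [dif_pos (by omega), h4]
      rw [IH (v - c4) (by omega)]
      rw [hlow v (by omega), hlow (v - c4) (by omega)]
      unfold gsm
      split_ifs <;> omega
    · -- c4 + 1 ≤ v < 2c4, coin c4+1
      rw [grd, dif_neg hv0,
        sup_eq c c4 hc4 h1 h2 h3 h4 h5 h6 v 5 (by omega) (by omega) (by omega)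
          (by intro i hi1 hi6; interval_cases i <;> omega)]
      rw [dif_pos (by omega), h5]
      rw [IH (v - (c4 + 1)) (by omega)]
      rw [hlow v (by omega), hlow (v - (c4 + 1)) (by omega)]
      unfold gsm
      split_ifs <;> omega
    · -- 2c4 ≤ v, coin 2c4
      rw [grd, dif_neg hv0,
        sup_eq c c4 hc4 h1 h2 h3 h4 h5 h6 v 6 (by omega) (by omega) (by omega)
          (by intro i hi1 hi6; interval_cases i <;> omega)]
      rw [dif_pos (by omega), h6]
      rw [IH (v - 2 * c4) (by omega)]
      have hv' := (Nat.div_add_mod v (2 * c4)).symm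
      set q := v / (2 * c4) with hq
      set r := v % (2 * c4) with hrd
      have hr : r < 2 * c4 := Nat.mod_lt _ hm2
      rcases Nat.eq_zero_or_pos q with hq0 | hqp
      · exfalso
        rw [hq0, Nat.mul_zero, Nat.zero_add] at hv'
        omega
      obtain ⟨k, hk⟩ : ∃ k, q = k + 1 := ⟨q - 1, by omega⟩
      rw [hk, Nat.mul_succ] at hv'
      have key := dm_helper (2 * c4) (v - 2 * c4) k r hm2 (by omega) hr
      unfold Gfun
      rw [key.1, key.2, ← hq, ← hrd, hk]
      omega

private lemma lower : ∀ v x, IsRepr 6 c v x → Gfun c4 v ≤ ∑ i ∈ Finset.Icc 1 6, x i := by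
  intro v
  induction v using Nat.strong_induction_on with
  | _ v IH =>
  intro x hx
  by_cases hv0 : v = 0
  · subst hv0
    unfold Gfun gsm
    norm_num
    rw [if_pos (show 0 < c4 by omega)]
    omega
  · -- some coin is used
    have hex : ∃ j ∈ Finset.Icc 1 6, 0 < x j := by
      by_contra hcon
      push_neg at hcon
      have : ∑ i ∈ Finset.Icc 1 6, c i * x i = 0 := by
        apply Finset.sum_eq_zero
        intro i hi
        have hxi : x i = 0 := Nat.le_zero.mp (hcon i hi)
        rw [hxi, Nat.mul_zero]
      have hxv : ∑ i ∈ Finset.Icc 1 6, c i * x i = v := hx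
      omega
    obtain ⟨j, hj, hxj⟩ := hex
    have hjIcc := Finset.mem_Icc.mp hj
    have hdecomp : c j * x j + ∑ i ∈ (Finset.Icc 1 6).erase j, c i * x i = v := by
      have h := Finset.add_sum_erase (Finset.Icc 1 6) (fun i => c i * x i) hj
      have hxv : ∑ i ∈ Finset.Icc 1 6, c i * x i = v := hx
      omega
    have hcnt : x j + ∑ i ∈ (Finset.Icc 1 6).erase j, x i = ∑ i ∈ Finset.Icc 1 6, x i := by
      have h := Finset.add_sum_erase (Finset.Icc 1 6) (fun i => x i) hj
      simpa using h
    have hcj_pos : 0 < c j := by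
      obtain ⟨hj1, hj6⟩ := hjIcc
      interval_cases j <;> omega
    -- split off one coin j
    obtain ⟨t, ht⟩ : ∃ t, x j = t + 1 := ⟨x j - 1, by omega⟩
    have hmul : c j * x j = c j * t + c j := by rw [ht, Nat.mul_succ]
    have hcj_le : c j ≤ v := by omega
    set x' : ℕ → ℕ := Function.update x j t with hx'
    have hagree : ∀ i ∈ (Finset.Icc 1 6).erase j, x' i = x i := by
      intro i hi
      have : i ≠ j := Finset.ne_of_mem_erase hi
      simp [hx', Function.update_of_ne this]
    have hx'j : x' j = t := by simp [hx']
    have heq : ∑ i ∈ (Finset.Icc 1 6).erase j, c i * x' i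
        = ∑ i ∈ (Finset.Icc 1 6).erase j, c i * x i :=
      Finset.sum_congr rfl (fun i hi => by rw [hagree i hi])
    have heq2 : ∑ i ∈ (Finset.Icc 1 6).erase j, x' i
        = ∑ i ∈ (Finset.Icc 1 6).erase j, x i :=
      Finset.sum_congr rfl (fun i hi => hagree i hi)
    have hrepr' : IsRepr 6 c (v - c j) x' := by
      unfold IsRepr
      have h := Finset.add_sum_erase (Finset.Icc 1 6) (fun i => c i * x' i) hj
      rw [hx'j, heq] at h
      omega
    have hcnt' : ∑ i ∈ Finset.Icc 1 6, x' i = (∑ i ∈ Finset.Icc 1 6, x i) - 1 := by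
      have h := Finset.add_sum_erase (Finset.Icc 1 6) (fun i => x' i) hj
      rw [hx'j, heq2] at h
      omega
    have hIH := IH (v - c j) (by omega) x' hrepr'
    have hd : c j = 1 ∨ c j = 2 ∨ c j = 3 ∨ c j = c4 ∨ c j = c4 + 1 ∨ c j = 2 * c4 := by
      obtain ⟨hj1, hj6⟩ := hjIcc
      interval_cases j <;> omega
    have hexch := Gfun_exch c4 hc4 (c j) v hd hcj_le
    omega

private lemma upper' (q r : ℕ) (hr : r < 2 * c4) :
    ∃ x : ℕ → ℕ, (∑ i ∈ Finset.Icc 1 6, c i * x i = 2 * c4 * q + r) ∧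
      ∑ i ∈ Finset.Icc 1 6, x i = q + gsm c4 r := by
  rcases (show r < c4 ∨ r = c4 ∨ c4 + 1 ≤ r by omega) with hrc | hrc | hrc
  · refine ⟨fun i =>
      if i = 1 then (if r % 3 = 1 then 1 else 0)
      else if i = 2 then (if r % 3 = 2 then 1 else 0)
      else if i = 3 then r / 3
      else if i = 6 then q else 0, ?_, ?_⟩ <;>
    · rw [show Finset.Icc 1 6 = {1, 2, 3, 4, 5, 6} from rfl]
      rw [Finset.sum_insert (by decide), Finset.sum_insert (by decide),
        Finset.sum_insert (by decide), Finset.sum_insert (by decide),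
        Finset.sum_insert (by decide), Finset.sum_singleton]
      norm_num [h1, h2, h3, h4, h5, h6, gsm]
      first
      | (split_ifs <;> omega)
      | omega
  · refine ⟨fun i => if i = 4 then 1 else if i = 6 then q else 0, ?_, ?_⟩ <;>
    · rw [show Finset.Icc 1 6 = {1, 2, 3, 4, 5, 6} from rfl]
      rw [Finset.sum_insert (by decide), Finset.sum_insert (by decide),
        Finset.sum_insert (by decide), Finset.sum_insert (by decide),
        Finset.sum_insert (by decide), Finset.sum_singleton]
      norm_num [h1, h2, h3, h4, h5, h6, gsm]
      first
      | (split_ifs <;> omega)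
      | omega
  · refine ⟨fun i =>
      if i = 1 then (if (r - (c4 + 1)) % 3 = 1 then 1 else 0)
      else if i = 2 then (if (r - (c4 + 1)) % 3 = 2 then 1 else 0)
      else if i = 3 then (r - (c4 + 1)) / 3
      else if i = 5 then 1
      else if i = 6 then q else 0, ?_, ?_⟩ <;>
    · rw [show Finset.Icc 1 6 = {1, 2, 3, 4, 5, 6} from rfl]
      rw [Finset.sum_insert (by decide), Finset.sum_insert (by decide),
        Finset.sum_insert (by decide), Finset.sum_insert (by decide),
        Finset.sum_insert (by decide), Finset.sum_singleton]
      norm_num [h1, h2, h3, h4, h5, h6, gsm]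
      first
      | (split_ifs <;> omega)
      | omega

private lemma upper (v : ℕ) :
    ∃ x : ℕ → ℕ, IsRepr 6 c v x ∧ ∑ i ∈ Finset.Icc 1 6, x i = Gfun c4 v := by
  have hm2 : 0 < 2 * c4 := by omega
  obtain ⟨x, hxr, hxs⟩ := upper' c c4 hc4 h1 h2 h3 h4 h5 h6 (v / (2 * c4)) (v % (2 * c4))
    (Nat.mod_lt v hm2)
  refine ⟨x, ?_, hxs⟩
  unfold IsRepr
  rw [hxr, Nat.div_add_mod]

private lemma opt_eq (v : ℕ) : opt 6 c v = Gfun c4 v := by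
  obtain ⟨x, hxr, hxs⟩ := upper c c4 hc4 h1 h2 h3 h4 h5 h6 v
  apply le_antisymm
  · exact Nat.sInf_le ⟨x, hxr, hxs⟩
  · unfold opt
    apply le_csInf
    · exact ⟨Gfun c4 v, x, hxr, hxs⟩
    rintro k ⟨y, hyr, hys⟩
    rw [← hys]
    exact lower c c4 hc4 h1 h2 h3 h4 h5 h6 v y hyr

end Family

theorem family_a_canonical (c : ℕ → ℕ) (c4 : ℕ) (hc4 : 4 < c4)
    (h1 : c 1 = 1) (h2 : c 2 = 2) (h3 : c 3 = 3) (h4 : c 4 = c4)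
    (h5 : c 5 = c4 + 1) (h6 : c 6 = 2 * c4) :
    Canonical 6 c ∧ ¬ Canonical 5 c ∧ IsCex 5 c (2 * c4) := by
  have sup5 : ∀ v j, 1 ≤ j → j ≤ 5 → c j ≤ v → (∀ i, 1 ≤ i → i ≤ 5 → c i ≤ v → c i ≤ c j) →
      ((Finset.Icc 1 5).filter (fun i => c i ≤ v)).sup c = c j := by
    intro v j hj1 hj5 hcj hmax
    apply le_antisymm
    · apply Finset.sup_le
      intro i hi
      simp only [Finset.mem_filter, Finset.mem_Icc] at hi
      exact hmax i hi.1.1 hi.1.2 hi.2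
    · apply Finset.le_sup (f := c)
      simp only [Finset.mem_filter, Finset.mem_Icc]
      exact ⟨⟨hj1, hj5⟩, hcj⟩
  have hCex : IsCex 5 c (2 * c4) := by
    refine ⟨by omega, ?_⟩
    have hopt : opt 5 c (2 * c4) ≤ 2 := by
      apply Nat.sInf_le
      refine ⟨fun i => if i = 4 then 2 else 0, ?_, ?_⟩ <;>
      · first
        | unfold IsRepr
        | skip
        rw [show Finset.Icc 1 5 = {1, 2, 3, 4, 5} from rfl]
        rw [Finset.sum_insert (by decide), Finset.sum_insert (by decide),
          Finset.sum_insert (by decide), Finset.sum_insert (by decide),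
          Finset.sum_singleton]
        norm_num [h1, h2, h3, h4, h5]
        try omega
    have e1 : grd 5 c (2 * c4) = grd 5 c (c4 - 1) + 1 := by
      rw [grd, dif_neg (show ¬ (2 * c4 = 0) by omega)]
      rw [sup5 (2 * c4) 5 (by omega) (by omega) (by omega)
        (by intro i hi1 hi5; interval_cases i <;> omega)]
      rw [dif_pos (by omega), h5, show 2 * c4 - (c4 + 1) = c4 - 1 by omega]
    have e2 : grd 5 c (c4 - 1) = grd 5 c (c4 - 4) + 1 := by
      rw [grd, dif_neg (show ¬ (c4 - 1 = 0) by omega)]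
      rw [sup5 (c4 - 1) 3 (by omega) (by omega) (by omega)
        (by intro i hi1 hi5; interval_cases i <;> omega)]
      rw [dif_pos (by omega), h3, show c4 - 1 - 3 = c4 - 4 by omega]
    have e3 : 1 ≤ grd 5 c (c4 - 4) := by
      rw [grd, dif_neg (show ¬ (c4 - 4 = 0) by omega)]
      have hm : 0 < ((Finset.Icc 1 5).filter (fun i => c i ≤ c4 - 4)).sup c := by
        apply lt_of_lt_of_le (show (0 : ℕ) < c 1 by omega)
        apply Finset.le_sup (f := c)
        simp only [Finset.mem_filter, Finset.mem_Icc]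
        exact ⟨⟨le_refl 1, by omega⟩, by omega⟩
      rw [dif_pos hm]
      omega
    omega
  refine ⟨?_, ?_, hCex⟩
  · intro v hv
    rw [opt_eq c c4 hc4 h1 h2 h3 h4 h5 h6 v, grd_eq c c4 hc4 h1 h2 h3 h4 h5 h6 v]
  · intro hcan
    have h := hcan (2 * c4) (by omega)
    have := hCex.2
    omega
end

section
/- Let C = (1, c₂, 2c₂, c₄, c₂+c₄, 2c₄) with c₄ ≥ 3c₂ − 1 and c₄ ≠ 3c₂, and let ℓ = ⌈(c₂+c₄)/(2c₂)⌉. Assume grd_C(ℓ·2c₂) = 2ℓc₂ − (c₂+c₄) + 1 − ⌊(2ℓc₂ − (c₂+c₄))/c₂⌋·(c₂−1) and grd_C(ℓ·2c₂) ≤ ℓ. Then C is canonical and the subsystem (1, c₂, 2c₂, c₄, c₂+c₄) is noncanonical. -/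
open Finset

namespace FamC

/-- greedy count with coins 1, a, 2a -/
def f (a s : ℕ) : ℕ := s / (2*a) + (s % (2*a)) / a + s % a

variable {a : ℕ} (ha : 2 ≤ a)

include ha

lemma f_add_two_a (s : ℕ) : f a (s + 2*a) = f a s + 1 := by
  have h2a : 0 < 2*a := by omega
  unfold f
  rw [Nat.add_div_right _ h2a, Nat.add_mod_right]
  have e : s + 2*a = s + a*2 := by ring
  rw [e, Nat.add_mul_mod_self_left]
  ring

lemma f_add_mul (x k : ℕ) : f a (x + 2*a*k) = f a x + k := by
  induction k with
  | zero => simp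
  | succ n ih =>
    have e : x + 2*a*(n+1) = (x + 2*a*n) + 2*a := by ring
    rw [e, f_add_two_a ha, ih]
    omega

lemma f_small {s : ℕ} (h : s < a) : f a s = s := by
  unfold f
  rw [Nat.div_eq_of_lt (by omega), Nat.mod_eq_of_lt (by omega),
    Nat.div_eq_of_lt (by omega), Nat.mod_eq_of_lt (by omega)]
  omega

lemma f_mid {s : ℕ} (h1 : a ≤ s) (h2 : s < 2*a) : f a s = s - a + 1 := by
  unfold f
  have hd : s / (2*a) = 0 := Nat.div_eq_of_lt (by omega)
  have hm : s % (2*a) = s := Nat.mod_eq_of_lt (by omega)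
  rw [hd, hm]
  have hda : s / a = 1 :=
    Nat.div_eq_of_lt_le (by omega) (by omega)
  have hma : s % a = s - a := by
    conv_lhs => rw [show s = (s - a) + 1*a by omega]
    rw [Nat.add_mul_mod_self_right, Nat.mod_eq_of_lt (by omega)]
  rw [hda, hma]
  omega

lemma f_decomp (s : ℕ) : ∃ k x, s = x + 2*a*k ∧ x < 2*a := by
  refine ⟨s / (2*a), s % (2*a), ?_, Nat.mod_lt _ (by omega)⟩
  have := Nat.div_add_mod s (2*a)
  omega

lemma f0_le {x : ℕ} (hx : x < 2*a) : f a x ≤ x := by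
  rcases lt_or_ge x a with h | h
  · rw [f_small ha h]
  · rw [f_mid ha h hx]; omega

lemma f_le_self (s : ℕ) : f a s ≤ s := by
  obtain ⟨k, x, rfl, hx⟩ := f_decomp ha s
  rw [f_add_mul ha]
  have h1 := f0_le ha hx
  have h2 : 1*k ≤ 2*a*k := Nat.mul_le_mul_right _ (by omega)
  omega

lemma f_succ_le (s : ℕ) : f a (s + 1) ≤ f a s + 1 := by
  obtain ⟨k, x, rfl, hx⟩ := f_decomp ha s
  rcases Nat.lt_or_ge (x+1) (2*a) with h | h
  · have e1 : x + 2*a*k + 1 = (x+1) + 2*a*k := by ring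
    rw [e1, f_add_mul ha, f_add_mul ha]
    rcases Nat.lt_or_ge (x+1) a with h2 | h2
    · rw [f_small ha h2, f_small ha (by omega)]
      omega
    · rw [f_mid ha h2 h]
      rcases Nat.lt_or_ge x a with h3 | h3
      · rw [f_small ha h3]; omega
      · rw [f_mid ha h3 hx]; omega
  · have hx1 : x + 1 = 2*a := by omega
    have hmm : 2*a*(k+1) = 2*a*k + 2*a := by ring
    have e1 : x + 2*a*k + 1 = 0 + 2*a*(k+1) := by omega
    rw [e1, f_add_mul ha, f_add_mul ha]
    rw [f_small ha (by omega), f_mid ha (by omega) hx]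
    omega

lemma f_le_add_a (s : ℕ) : f a s ≤ f a (s + a) := by
  obtain ⟨k, x, rfl, hx⟩ := f_decomp ha s
  rcases Nat.lt_or_ge x a with h | h
  · have e1 : x + 2*a*k + a = (x+a) + 2*a*k := by ring
    rw [e1, f_add_mul ha, f_add_mul ha, f_small ha h, f_mid ha (by omega) (by omega)]
    omega
  · have hmm : 2*a*(k+1) = 2*a*k + 2*a := by ring
    have e1 : x + 2*a*k + a = (x-a) + 2*a*(k+1) := by omega
    rw [e1, f_add_mul ha, f_add_mul ha, f_mid ha h hx, f_small ha (by omega)]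
    omega

lemma f_add_a_le (s : ℕ) : f a (s + a) ≤ f a s + 1 := by
  obtain ⟨k, x, rfl, hx⟩ := f_decomp ha s
  rcases Nat.lt_or_ge x a with h | h
  · have e1 : x + 2*a*k + a = (x+a) + 2*a*k := by ring
    rw [e1, f_add_mul ha, f_add_mul ha, f_small ha h, f_mid ha (by omega) (by omega)]
    omega
  · have hmm : 2*a*(k+1) = 2*a*k + 2*a := by ring
    have e1 : x + 2*a*k + a = (x-a) + 2*a*(k+1) := by omega
    rw [e1, f_add_mul ha, f_add_mul ha, f_mid ha h hx, f_small ha (by omega)]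
    omega

lemma f_add_le (s t : ℕ) : f a (s + t) ≤ f a s + t := by
  induction t with
  | zero => simp
  | succ n ih =>
    have e : s + (n+1) = (s + n) + 1 := by ring
    rw [e]
    have := f_succ_le ha (s+n)
    omega



section Core

variable {b ℓ s₀ : ℕ} (hb : 3*a - 1 ≤ b) (hb' : b ≠ 3*a)
  (hsum : a + b + s₀ = 2*a*ℓ) (hs₀ : s₀ < 2*a) (hH : 1 + f a s₀ ≤ ℓ)

include ha hb hsum hs₀

lemma ell_ge2 : 2 ≤ ℓ := by
  by_contra h
  push_neg at h
  interval_cases ℓ <;> omega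

include hH

lemma P1 : ∀ u x, u < a → x + 2*a = u + b → u ≤ f a x := by
  intro u x hu hx
  obtain ⟨m, rfl⟩ : ∃ m, ℓ = m + 2 := ⟨ℓ - 2, by have := ell_ge2 ha hb hsum hs₀; omega⟩
  have ht : a + b + s₀ = 2*(a*m) + 4*a := by rw [hsum]; ring
  rcases Nat.lt_or_ge s₀ a with hc | hc
  · -- s₀ < a
    rw [f_small ha hc] at hH
    have e : x = (u + a - s₀) + 2*a*m := by
      have h1 : 2*a*m = 2*(a*m) := by ring
      omega
    rw [e, f_add_mul ha]
    rcases Nat.lt_or_ge u s₀ with h2 | h2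
    · rw [f_small ha (by omega)]; omega
    · rw [f_mid ha (by omega) (by omega)]; omega
  · -- s₀ = a + w
    rw [f_mid ha hc hs₀] at hH
    rcases Nat.lt_or_ge u (s₀ - a) with h2 | h2
    · -- u < w, need m ≥ 1
      obtain ⟨n, rfl⟩ : ∃ n, m = n + 1 := ⟨m - 1, by omega⟩
      have e : x = (2*a - (s₀ - a - u)) + 2*a*n := by
        have h1 : 2*(a*(n+1)) = 2*(a*n) + 2*a := by ring
        have h2' : 2*a*n = 2*(a*n) := by ring
        omega
      rw [e, f_add_mul ha, f_mid ha (by omega) (by omega)]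
      omega
    · have e : x = (u - (s₀ - a)) + 2*a*m := by
        have h1 : 2*a*m = 2*(a*m) := by ring
        omega
      rw [e, f_add_mul ha, f_small ha (by omega)]
      omega

lemma P2 (hb3 : 3*a + 1 ≤ b) : ∀ r x, r < 2*a → x + 3*a = r + b → f a r ≤ 1 + f a x := by
  intro r x hr hx
  obtain ⟨m, rfl⟩ : ∃ m, ℓ = m + 3 := by
    refine ⟨ℓ - 3, ?_⟩
    have h3 : 3 ≤ ℓ := by
      by_contra h
      push_neg at h
      interval_cases ℓ <;> omega
    omega
  have ht : a + b + s₀ = 2*(a*m) + 6*a := by rw [hsum]; ring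
  rcases Nat.lt_or_ge s₀ a with hc | hc
  · rw [f_small ha hc] at hH
    rcases Nat.lt_or_ge r s₀ with h2 | h2
    · have e : x = (2*a - s₀ + r) + 2*a*m := by
        have h1 : 2*a*m = 2*(a*m) := by ring
        omega
      rw [e, f_add_mul ha, f_small ha (by omega), f_mid ha (by omega) (by omega)]
      omega
    · have e : x = (r - s₀) + 2*a*(m+1) := by
        have h1 : 2*a*(m+1) = 2*(a*m) + 2*a := by ring
        omega
      rw [e, f_add_mul ha]
      have h3 : f a r ≤ f a (r - s₀) + s₀ := by
        have := f_add_le ha (r - s₀) s₀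
        rw [show r - s₀ + s₀ = r by omega] at this
        exact this
      omega
  · rw [f_mid ha hc hs₀] at hH
    rcases Nat.lt_or_ge r (s₀ - a) with h2 | h2
    · -- r < w
      have e : x = (a - (s₀ - a) + r) + 2*a*m := by
        have h1 : 2*a*m = 2*(a*m) := by ring
        omega
      rw [e, f_add_mul ha, f_small ha (by omega), f_small ha (by omega)]
      omega
    · rcases Nat.lt_or_ge r a with h3 | h3
      · -- w ≤ r < a
        have e : x = (a - (s₀ - a) + r) + 2*a*m := by
          have h1 : 2*a*m = 2*(a*m) := by ring
          omega
        rw [e, f_add_mul ha, f_small ha (by omega), f_mid ha (by omega) (by omega)]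
        omega
      · rcases Nat.lt_or_ge r (s₀ - a + a) with h4 | h4
        · -- a ≤ r < a + w
          have e : x = (a - (s₀ - a) + r) + 2*a*m := by
            have h1 : 2*a*m = 2*(a*m) := by ring
            omega
          rw [e, f_add_mul ha, f_mid ha (by omega) (by omega),
            f_mid ha (by omega) (by omega)]
          omega
        · -- r ≥ a + w
          have e : x = (r - a - (s₀ - a)) + 2*a*(m+1) := by
            have h1 : 2*a*(m+1) = 2*(a*m) + 2*a := by ring
            omega
          rw [e, f_add_mul ha, f_mid ha (by omega) (by omega), f_small ha (by omega)]
          omega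


/-- one "period" of the greedy count for coins 1,a,2a,b,a+b,2b -/
def h (a b r : ℕ) : ℕ :=
  if a + b ≤ r then 1 + f a (r - (a+b)) else if b ≤ r then 1 + (r - b) else f a r

omit ha hb hsum hs₀ hH in
lemma h_top {r : ℕ} (h1 : a + b ≤ r) : h a b r = 1 + f a (r - (a+b)) := by
  unfold h; rw [if_pos h1]

omit ha hb hsum hs₀ hH in
lemma h_mid {r : ℕ} (h1 : b ≤ r) (h2 : r < a + b) : h a b r = 1 + (r - b) := by
  unfold h; rw [if_neg (by omega), if_pos h1]

omit ha hb hsum hs₀ hH in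
lemma h_low {r : ℕ} (h1 : r < b) : h a b r = f a r := by
  unfold h; rw [if_neg (by omega), if_neg (by omega)]

-- coin 1
omit hsum hs₀ hH in
lemma I1 {r : ℕ} (h1 : 1 ≤ r) (h2 : r < 2*b) : h a b r ≤ h a b (r-1) + 1 := by
  rcases Nat.lt_or_ge r (a+b) with hc | hc
  · rcases Nat.lt_or_ge r b with hd | hd
    · rw [h_low hd, h_low (by omega)]
      have := f_succ_le ha (r-1)
      rw [show r - 1 + 1 = r by omega] at this
      omega
    · rcases Nat.lt_or_ge (r-1) b with he | he
      · -- r = b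
        rw [h_mid hd hc, h_low he, show r = b by omega]
        omega
      · rw [h_mid hd hc, h_mid he (by omega)]
        omega
  · rcases Nat.lt_or_ge (r-1) (a+b) with he | he
    · -- r = a + b
      rw [h_top hc, h_mid (by omega) he, show r - (a+b) = 0 by omega,
        f_small ha (by omega)]
      omega
    · rw [h_top hc, h_top he]
      have := f_succ_le ha (r - 1 - (a+b))
      rw [show r - 1 - (a+b) + 1 = r - (a+b) by omega] at this
      omega

-- coin a, case (i)
include hsum hs₀ hH in
lemma I2i {r : ℕ} (h1 : a ≤ r) (h2 : r < 2*b) : h a b r ≤ h a b (r-a) + 1 := by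
  rcases Nat.lt_or_ge r b with hc | hc
  · rw [h_low hc, h_low (by omega)]
    have := f_add_a_le ha (r-a)
    rw [show r - a + a = r by omega] at this
    omega
  · rcases Nat.lt_or_ge r (a+b) with hd | hd
    · -- b ≤ r < a+b
      rw [h_mid hc hd, h_low (by omega)]
      have hP := P1 ha hb hsum hs₀ hH (r-b) (r-2*a) (by omega) (by omega)
      have hA := f_le_add_a ha (r-2*a)
      rw [show r - 2*a + a = r - a by omega] at hA
      omega
    · rcases Nat.lt_or_ge r (2*a+b) with he | he
      · rw [h_top hd, h_mid (by omega) (by omega)]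
        have := f_le_self ha (r - (a+b))
        omega
      · rw [h_top hd, h_top (by omega)]
        have := f_add_a_le ha (r - a - (a+b))
        rw [show r - a - (a+b) + a = r - (a+b) by omega] at this
        omega

-- coin a, case (ii)
include hsum hs₀ hH in
lemma I2ii {r : ℕ} (h1 : r < a) : h a b r ≤ h a b (2*b - a + r) := by
  have e1 : 2*b - a + r - (a+b) = b - 2*a + r := by omega
  rw [h_low (by omega), h_top (by omega), f_small ha h1, e1]
  have hP := P1 ha hb hsum hs₀ hH r (b - 2*a + r) h1 (by omega)
  omega

-- coin 2a, case (i)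
include hsum hs₀ hH in
lemma I3i {r : ℕ} (h1 : 2*a ≤ r) (h2 : r < 2*b) : h a b r ≤ h a b (r-2*a) + 1 := by
  rcases Nat.lt_or_ge r b with hc | hc
  · rw [h_low hc, h_low (by omega)]
    have := f_add_two_a ha (r-2*a)
    rw [show r - 2*a + 2*a = r by omega] at this
    omega
  · rcases Nat.lt_or_ge r (a+b) with hd | hd
    · rw [h_mid hc hd, h_low (by omega)]
      have hP := P1 ha hb hsum hs₀ hH (r-b) (r-2*a) (by omega) (by omega)
      omega
    · rcases Nat.lt_or_ge r (b+2*a) with he | he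
      · -- a+b ≤ r < b+2a
        rw [h_top hd, h_low (by omega)]
        have hP := P1 ha hb hsum hs₀ hH (r-(a+b)) (r-3*a) (by omega) (by omega)
        have hA := f_le_add_a ha (r-3*a)
        rw [show r - 3*a + a = r - 2*a by omega] at hA
        have hsm : f a (r - (a+b)) = r - (a+b) := f_small ha (by omega)
        omega
      · rcases Nat.lt_or_ge r (3*a+b) with hf | hf
        · rw [h_top hd, h_mid (by omega) (by omega)]
          have := f_mid ha (le_refl a) (by omega)
          have hmid : f a (r - (a+b)) = r - (a+b) - a + 1 :=
            f_mid ha (by omega) (by omega)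
          omega
        · rw [h_top hd, h_top (by omega)]
          have := f_add_two_a ha (r - 2*a - (a+b))
          rw [show r - 2*a - (a+b) + 2*a = r - (a+b) by omega] at this
          omega

-- coin 2a, case (ii)
include hb' hsum hs₀ hH in
lemma I3ii {r : ℕ} (h1 : r < 2*a) : h a b r ≤ h a b (2*b - 2*a + r) := by
  rcases Nat.lt_or_ge b (3*a) with hc | hc
  · -- b = 3a - 1
    have hb3 : b = 3*a - 1 := by omega
    rcases Nat.eq_zero_or_pos r with rfl | hr
    · rw [h_low (by omega), f_small ha (by omega)]
      exact Nat.zero_le _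
    · rw [h_low (by omega), h_top (by omega)]
      have := f_succ_le ha (r-1)
      rw [show r - 1 + 1 = r by omega] at this
      rw [show 2*b - 2*a + r - (a+b) = r - 1 by omega]
      omega
  · -- b ≥ 3a+1
    have hb3 : 3*a + 1 ≤ b := by omega
    rw [h_low (by omega), h_top (by omega)]
    have hP := P2 ha hb hsum hs₀ hH hb3 r (b - 3*a + r) h1 (by omega)
    rw [show 2*b - 2*a + r - (a+b) = b - 3*a + r by omega]
    omega

-- coin b, case (i)
omit hsum hs₀ hH in
lemma I4i {r : ℕ} (h1 : b ≤ r) (h2 : r < 2*b) : h a b r ≤ h a b (r-b) + 1 := by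
  rcases Nat.lt_or_ge r (a+b) with hc | hc
  · rw [h_mid h1 hc, h_low (by omega), f_small ha (by omega)]
    omega
  · rw [h_top hc, h_low (by omega)]
    have := f_le_add_a ha (r - (a+b))
    rw [show r - (a+b) + a = r - b by omega] at this
    omega

-- coin b, case (ii)
omit hsum hs₀ hH in
lemma I4ii {r : ℕ} (h1 : r < b) : h a b r ≤ h a b (b + r) := by
  rcases Nat.lt_or_ge r a with hc | hc
  · rw [h_low h1, h_mid (by omega) (by omega), f_small ha hc]
    omega
  · rw [h_low h1, h_top (by omega)]
    have := f_add_a_le ha (r - a)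
    rw [show r - a + a = r by omega] at this
    rw [show b + r - (a+b) = r - a by omega]
    omega

-- coin a+b, case (i)
omit hsum hs₀ hH in
lemma I5i {r : ℕ} (h1 : a+b ≤ r) (h2 : r < 2*b) : h a b r ≤ h a b (r-(a+b)) + 1 := by
  rw [h_top h1, h_low (by omega)]
  omega

-- coin a+b, case (ii)
include hsum hs₀ hH in
lemma I5ii {r : ℕ} (h1 : r < a+b) : h a b r ≤ h a b (b - a + r) := by
  rcases Nat.lt_or_ge r a with hc | hc
  · rw [h_low (by omega), h_low (by omega), f_small ha hc]
    have hP := P1 ha hb hsum hs₀ hH r (b - 2*a + r) hc (by omega)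
    have hA := f_le_add_a ha (b - 2*a + r)
    rw [show b - 2*a + r + a = b - a + r by omega] at hA
    omega
  · rcases Nat.lt_or_ge r (2*a) with hd | hd
    · rw [h_low (by omega), h_mid (by omega) (by omega), f_mid ha hc hd]
      omega
    · rcases Nat.lt_or_ge r b with he | he
      · rw [h_low he, h_top (by omega)]
        have := f_add_two_a ha (r - 2*a)
        rw [show r - 2*a + 2*a = r by omega] at this
        rw [show b - a + r - (a+b) = r - 2*a by omega]
        omega
      · rw [h_mid he h1, h_top (by omega)]
        have hP := P1 ha hb hsum hs₀ hH (r-b) (r-2*a) (by omega) (by omega)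
        rw [show b - a + r - (a+b) = r - 2*a by omega]
        omega

end Core

section Generic
omit ha




lemma grd_zero (n : ℕ) (c : ℕ → ℕ) : grd n c 0 = 0 := by rw [grd]; simp

lemma sup_coins {n : ℕ} {c : ℕ → ℕ} {v j : ℕ} (hj : j ∈ Finset.Icc 1 n) (h1 : c j ≤ v)
    (h2 : ∀ i ∈ Finset.Icc 1 n, c i ≤ v → c i ≤ c j) :
    ((Finset.Icc 1 n).filter (fun i => c i ≤ v)).sup c = c j := by
  apply le_antisymm
  · exact Finset.sup_le fun i hi =>
      h2 i (Finset.mem_filter.mp hi).1 (Finset.mem_filter.mp hi).2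
  · exact Finset.le_sup (Finset.mem_filter.mpr ⟨hj, h1⟩)

lemma grd_step_sup {n : ℕ} {c : ℕ → ℕ} {v j : ℕ} (hv : v ≠ 0) (hpos : 0 < c j)
    (hsup : ((Finset.Icc 1 n).filter (fun i => c i ≤ v)).sup c = c j) :
    grd n c v = grd n c (v - c j) + 1 := by
  rw [grd]
  simp only [hv, dite_false]
  rw [hsup]
  simp [hpos]

lemma grd_step {n : ℕ} {c : ℕ → ℕ} {v j : ℕ} (hj : j ∈ Finset.Icc 1 n) (h1 : c j ≤ v)
    (h2 : ∀ i ∈ Finset.Icc 1 n, c i ≤ v → c i ≤ c j) (hpos : 0 < c j) (hv : v ≠ 0) :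
    grd n c v = grd n c (v - c j) + 1 :=
  grd_step_sup hv hpos (sup_coins hj h1 h2)

lemma grd_pos {n : ℕ} {c : ℕ → ℕ} {v : ℕ} (hn : 1 ≤ n) (hc1 : c 1 = 1) (hv : v ≠ 0) :
    1 ≤ grd n c v := by
  have h1 : c 1 ≤ ((Finset.Icc 1 n).filter (fun i => c i ≤ v)).sup c :=
    Finset.le_sup (Finset.mem_filter.mpr ⟨Finset.mem_Icc.mpr ⟨le_refl 1, hn⟩, by omega⟩)
  rw [grd]
  simp only [hv, dite_false]
  rw [dif_pos (by omega)]
  omega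

lemma opt_le {n : ℕ} {c : ℕ → ℕ} {v k : ℕ} (x : ℕ → ℕ) (hx : IsRepr n c v x)
    (hk : ∑ i ∈ Finset.Icc 1 n, x i = k) : opt n c v ≤ k :=
  Nat.sInf_le ⟨x, hx, hk⟩

lemma opt_mem {n : ℕ} {c : ℕ → ℕ} (hn : 1 ≤ n) (hc1 : c 1 = 1) (v : ℕ) :
    ∃ x, IsRepr n c v x ∧ ∑ i ∈ Finset.Icc 1 n, x i = opt n c v := by
  have hne : {k | ∃ x : ℕ → ℕ, IsRepr n c v x ∧ ∑ i ∈ Finset.Icc 1 n, x i = k}.Nonempty := by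
    refine ⟨∑ i ∈ Finset.Icc 1 n, (fun i => if i = 1 then v else 0) i,
      fun i => if i = 1 then v else 0, ?_, rfl⟩
    unfold IsRepr
    rw [Finset.sum_congr rfl (fun i _ => by
      show c i * (if i = 1 then v else 0) = if i = 1 then c i * v else 0
      split <;> simp)]
    rw [Finset.sum_ite_eq' (Finset.Icc 1 n) 1 (fun i => c i * v)]
    simp [Finset.mem_Icc, hn, hc1]
  exact Nat.sInf_mem hne

lemma opt_le_sub_add {n : ℕ} {c : ℕ → ℕ} {v j : ℕ} (hn : 1 ≤ n) (hc1 : c 1 = 1)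
    (hj : j ∈ Finset.Icc 1 n) (hcj : c j ≤ v) :
    opt n c v ≤ opt n c (v - c j) + 1 := by
  obtain ⟨x, hx, hs⟩ := opt_mem hn hc1 (v - c j)
  set x' : ℕ → ℕ := fun i => x i + if i = j then 1 else 0 with hx'
  have hrepr : IsRepr n c v x' := by
    unfold IsRepr
    have : ∀ i ∈ Finset.Icc 1 n, c i * x' i = c i * x i + (if i = j then c i else 0) := by
      intro i _
      rw [hx']
      by_cases hij : i = j
      · simp only [hij, if_true]; ring
      · simp only [hij, if_false]; ring
    rw [Finset.sum_congr rfl this, Finset.sum_add_distrib, hx,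
      Finset.sum_ite_eq' (Finset.Icc 1 n) j (fun i => c i)]
    simp only [hj, if_true]
    omega
  refine opt_le x' hrepr ?_
  rw [Finset.sum_congr rfl (fun i _ => rfl), hx']
  rw [Finset.sum_add_distrib, hs, Finset.sum_ite_eq' (Finset.Icc 1 n) j (fun _ => 1)]
  simp [hj]

lemma opt_le_grd {n : ℕ} {c : ℕ → ℕ} (hn : 1 ≤ n) (hc1 : c 1 = 1) :
    ∀ v, opt n c v ≤ grd n c v := by
  intro v
  induction v using Nat.strong_induction_on with
  | _ v ih =>
    rcases Nat.eq_zero_or_pos v with rfl | hv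
    · rw [grd_zero]
      exact opt_le (fun _ => 0) (by unfold IsRepr; simp) (by simp)
    · have hfne : ((Finset.Icc 1 n).filter (fun i => c i ≤ v)).Nonempty :=
        ⟨1, Finset.mem_filter.mpr ⟨Finset.mem_Icc.mpr ⟨le_refl 1, hn⟩, by omega⟩⟩
      obtain ⟨j, hjmem, hjsup⟩ := Finset.exists_mem_eq_sup _ hfne c
      rw [Finset.mem_filter] at hjmem
      have hpos : 0 < c j := by
        have : c 1 ≤ ((Finset.Icc 1 n).filter (fun i => c i ≤ v)).sup c :=
          Finset.le_sup (Finset.mem_filter.mpr ⟨Finset.mem_Icc.mpr ⟨le_refl 1, hn⟩, by omega⟩)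
        omega
      rw [grd_step_sup (by omega) hpos hjsup]
      have h1 := opt_le_sub_add hn hc1 hjmem.1 hjmem.2
      have h2 := ih (v - c j) (by omega)
      omega

lemma grd_le_opt {n : ℕ} {c : ℕ → ℕ} (hn : 1 ≤ n) (hc1 : c 1 = 1)
    (hcpos : ∀ i ∈ Finset.Icc 1 n, 0 < c i)
    (hex : ∀ v j, j ∈ Finset.Icc 1 n → c j ≤ v → grd n c v ≤ grd n c (v - c j) + 1) :
    ∀ v, grd n c v ≤ opt n c v := by
  intro v
  induction v using Nat.strong_induction_on with
  | _ v ih =>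
    rcases Nat.eq_zero_or_pos v with rfl | hv
    · rw [grd_zero]; omega
    · obtain ⟨x, hx, hs⟩ := opt_mem hn hc1 v
      have hex0 : ∃ j ∈ Finset.Icc 1 n, x j ≠ 0 := by
        by_contra hcon
        push_neg at hcon
        rw [IsRepr, Finset.sum_eq_zero (fun i hi => by rw [hcon i hi, mul_zero])] at hx
        omega
      obtain ⟨j, hjmem, hxj⟩ := hex0
      have hcj : c j * x j ≤ v := by
        rw [← hx]
        exact Finset.single_le_sum (f := fun i => c i * x i) (fun i _ => Nat.zero_le _) hjmem
      have hcjv : c j ≤ v := le_trans (Nat.le_mul_of_pos_right _ (by omega)) hcj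
      have hpos : 0 < c j := hcpos j hjmem
      -- build decremented representation
      set x' : ℕ → ℕ := fun i => if i = j then x j - 1 else x i with hx'def
      have hsplit : ∑ i ∈ (Finset.Icc 1 n).erase j, c i * x i + c j * x j = v := by
        rw [Finset.sum_erase_add _ _ hjmem]; exact hx
      have hsplit2 : ∑ i ∈ (Finset.Icc 1 n).erase j, x i + x j = opt n c v := by
        rw [Finset.sum_erase_add _ _ hjmem]; exact hs
      have herase : ∑ i ∈ (Finset.Icc 1 n).erase j, c i * x' i
          = ∑ i ∈ (Finset.Icc 1 n).erase j, c i * x i :=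
        Finset.sum_congr rfl (fun i hi => by
          rw [hx'def]
          simp [(Finset.mem_erase.mp hi).1])
      have herase2 : ∑ i ∈ (Finset.Icc 1 n).erase j, x' i
          = ∑ i ∈ (Finset.Icc 1 n).erase j, x i :=
        Finset.sum_congr rfl (fun i hi => by
          rw [hx'def]
          simp [(Finset.mem_erase.mp hi).1])
      have hmul : c j * x j = c j * (x j - 1) + c j := by
        obtain ⟨t, ht⟩ : ∃ t, x j = t + 1 := ⟨x j - 1, by omega⟩
        rw [ht]
        simp [Nat.add_sub_cancel]
        ring
      have hrepr : IsRepr n c (v - c j) x' := by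
        unfold IsRepr
        rw [← Finset.sum_erase_add _ _ hjmem, herase]
        have : x' j = x j - 1 := by rw [hx'def]; simp
        rw [this]
        omega
      have hcount : ∑ i ∈ Finset.Icc 1 n, x' i = opt n c v - 1 := by
        rw [← Finset.sum_erase_add _ _ hjmem, herase2]
        have : x' j = x j - 1 := by rw [hx'def]; simp
        rw [this]
        omega
      have hopt : opt n c (v - c j) ≤ opt n c v - 1 := opt_le x' hrepr hcount
      have hoptpos : 1 ≤ opt n c v := by
        rw [← hsplit2]; omega
      have h1 := hex v j hjmem hcjv
      have h2 := ih (v - c j) (by omega)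
      omega


end Generic

end FamC

namespace FamC

section Spec

variable {c : ℕ → ℕ} {a b : ℕ} (ha : 2 ≤ a) (hb : 3*a - 1 ≤ b) (hb' : b ≠ 3*a)
  (hc1 : c 1 = 1) (hc2 : c 2 = a) (hc3 : c 3 = 2*a) (hc4 : c 4 = b)
  (hc5 : c 5 = a + b) (hc6 : c 6 = 2*b)

include ha hb hc1 hc2 hc3 hc4 hc5 hc6

lemma grd6_eq : ∀ v, grd 6 c v = v / (2*b) + h a b (v % (2*b)) := by
  intro v
  induction v using Nat.strong_induction_on with
  | _ v ih =>
  rcases Nat.eq_zero_or_pos v with rfl | hv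
  · rw [grd_zero, Nat.zero_div, Nat.zero_mod, h_low (by omega), f_small ha (by omega)]
  rcases Nat.lt_or_ge v a with hR | hR
  · -- 1 ≤ v < a : coin 1
    rw [grd_step (j := 1) (Finset.mem_Icc.mpr (by omega)) (by rw [hc1]; omega)
        (by intro i hi hci; rw [Finset.mem_Icc] at hi; obtain ⟨hi1, hi2⟩ := hi; interval_cases i <;>
            simp only [hc1, hc2, hc3, hc4, hc5, hc6] at hci ⊢ <;> omega)
        (by rw [hc1]; omega) (by omega), hc1]
    rw [ih (v-1) (by omega)]
    rw [Nat.div_eq_of_lt (show v - 1 < 2*b by omega), Nat.mod_eq_of_lt (show v - 1 < 2*b by omega),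
      Nat.div_eq_of_lt (show v < 2*b by omega), Nat.mod_eq_of_lt (show v < 2*b by omega)]
    rw [h_low (show v - 1 < b by omega), h_low (show v < b by omega),
      f_small ha (show v - 1 < a by omega), f_small ha (show v < a by omega)]
    omega
  rcases Nat.lt_or_ge v (2*a) with hR2 | hR2
  · -- a ≤ v < 2a : coin 2
    rw [grd_step (j := 2) (Finset.mem_Icc.mpr (by omega)) (by rw [hc2]; omega)
        (by intro i hi hci; rw [Finset.mem_Icc] at hi; obtain ⟨hi1, hi2⟩ := hi; interval_cases i <;>
            simp only [hc1, hc2, hc3, hc4, hc5, hc6] at hci ⊢ <;> omega)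
        (by rw [hc2]; omega) (by omega), hc2]
    rw [ih (v-a) (by omega)]
    rw [Nat.div_eq_of_lt (show v - a < 2*b by omega), Nat.mod_eq_of_lt (show v - a < 2*b by omega),
      Nat.div_eq_of_lt (show v < 2*b by omega), Nat.mod_eq_of_lt (show v < 2*b by omega)]
    rw [h_low (show v - a < b by omega), h_low (show v < b by omega),
      f_mid ha (show a ≤ v by omega) (show v < 2*a by omega),
      f_small ha (show v - a < a by omega)]
    omega
  rcases Nat.lt_or_ge v b with hR3 | hR3
  · -- 2a ≤ v < b : coin 3
    rw [grd_step (j := 3) (Finset.mem_Icc.mpr (by omega)) (by rw [hc3]; omega)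
        (by intro i hi hci; rw [Finset.mem_Icc] at hi; obtain ⟨hi1, hi2⟩ := hi; interval_cases i <;>
            simp only [hc1, hc2, hc3, hc4, hc5, hc6] at hci ⊢ <;> omega)
        (by rw [hc3]; omega) (by omega), hc3]
    rw [ih (v-2*a) (by omega)]
    rw [Nat.div_eq_of_lt (show v - 2*a < 2*b by omega), Nat.mod_eq_of_lt (show v - 2*a < 2*b by omega),
      Nat.div_eq_of_lt (show v < 2*b by omega), Nat.mod_eq_of_lt (show v < 2*b by omega)]
    rw [h_low (show v - 2*a < b by omega), h_low (show v < b by omega)]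
    have hf := f_add_two_a ha (v - 2*a)
    rw [show v - 2*a + 2*a = v by omega] at hf
    omega
  rcases Nat.lt_or_ge v (a+b) with hR4 | hR4
  · -- b ≤ v < a+b : coin 4
    rw [grd_step (j := 4) (Finset.mem_Icc.mpr (by omega)) (by rw [hc4]; omega)
        (by intro i hi hci; rw [Finset.mem_Icc] at hi; obtain ⟨hi1, hi2⟩ := hi; interval_cases i <;>
            simp only [hc1, hc2, hc3, hc4, hc5, hc6] at hci ⊢ <;> omega)
        (by rw [hc4]; omega) (by omega), hc4]
    rw [ih (v-b) (by omega)]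
    rw [Nat.div_eq_of_lt (show v - b < 2*b by omega), Nat.mod_eq_of_lt (show v - b < 2*b by omega),
      Nat.div_eq_of_lt (show v < 2*b by omega), Nat.mod_eq_of_lt (show v < 2*b by omega)]
    rw [h_mid (show b ≤ v by omega) (show v < a + b by omega),
      h_low (show v - b < b by omega), f_small ha (show v - b < a by omega)]
    omega
  rcases Nat.lt_or_ge v (2*b) with hR5 | hR5
  · -- a+b ≤ v < 2b : coin 5
    rw [grd_step (j := 5) (Finset.mem_Icc.mpr (by omega)) (by rw [hc5]; omega)
        (by intro i hi hci; rw [Finset.mem_Icc] at hi; obtain ⟨hi1, hi2⟩ := hi; interval_cases i <;>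
            simp only [hc1, hc2, hc3, hc4, hc5, hc6] at hci ⊢ <;> omega)
        (by rw [hc5]; omega) (by omega), hc5]
    rw [ih (v-(a+b)) (by omega)]
    rw [Nat.div_eq_of_lt (show v - (a+b) < 2*b by omega), Nat.mod_eq_of_lt (show v - (a+b) < 2*b by omega),
      Nat.div_eq_of_lt (show v < 2*b by omega), Nat.mod_eq_of_lt (show v < 2*b by omega)]
    rw [h_top (show a + b ≤ v by omega), h_low (show v - (a+b) < b by omega)]
    omega
  · -- v ≥ 2b : coin 6
    rw [grd_step (j := 6) (Finset.mem_Icc.mpr (by omega)) (by rw [hc6]; omega)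
        (by intro i hi hci; rw [Finset.mem_Icc] at hi; obtain ⟨hi1, hi2⟩ := hi; interval_cases i <;>
            simp only [hc1, hc2, hc3, hc4, hc5, hc6] at hci ⊢ <;> omega)
        (by rw [hc6]; omega) (by omega), hc6]
    obtain ⟨u, rfl⟩ : ∃ u, v = u + 2*b := ⟨v - 2*b, by omega⟩
    rw [show u + 2*b - 2*b = u by omega, ih u (by omega),
      Nat.add_div_right u (by omega), Nat.add_mod_right]
    omega

lemma exchange6 {ℓ s₀ : ℕ} (hb' : b ≠ 3*a) (hsum : a + b + s₀ = 2*a*ℓ)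
    (hs₀ : s₀ < 2*a) (hH : 1 + f a s₀ ≤ ℓ) :
    ∀ v j, j ∈ Finset.Icc 1 6 → c j ≤ v → grd 6 c v ≤ grd 6 c (v - c j) + 1 := by
  intro v j hj hcj
  rw [grd6_eq ha hb hc1 hc2 hc3 hc4 hc5 hc6,
    grd6_eq ha hb hc1 hc2 hc3 hc4 hc5 hc6]
  have h2b : 0 < 2*b := by omega
  have hqr := Nat.div_add_mod v (2*b)
  have hrlt : v % (2*b) < 2*b := Nat.mod_lt _ h2b
  rw [Finset.mem_Icc] at hj
  obtain ⟨hj1, hj2⟩ := hj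
  -- generic treatment for each coin
  have main : ∀ d : ℕ, 0 < d → d ≤ 2*b → c j = d →
      (∀ r, d ≤ r → r < 2*b → h a b r ≤ h a b (r - d) + 1) →
      (∀ r, r < d → h a b r ≤ h a b (2*b + r - d)) →
      v / (2*b) + h a b (v % (2*b)) ≤ (v - c j) / (2*b) + h a b ((v - c j) % (2*b)) + 1 := by
    intro d hd hd2 hcd hi hii
    rw [hcd] at hcj ⊢
    rcases Nat.lt_or_ge (v % (2*b)) d with hcase | hcase
    · -- borrow from quotient
      obtain ⟨t, ht⟩ : ∃ t, v / (2*b) = t + 1 := by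
        refine ⟨v / (2*b) - 1, ?_⟩
        rcases Nat.eq_zero_or_pos (v / (2*b)) with h0 | h0
        · rw [h0] at hqr; simp at hqr; omega
        · omega
      have hmul : 2*b*(t+1) = 2*b*t + 2*b := by ring
      have hdm := (Nat.div_mod_unique h2b).mpr
        (⟨by rw [ht] at hqr; omega, by omega⟩ :
          (2*b + v % (2*b) - d) + 2*b*t = v - d ∧ 2*b + v % (2*b) - d < 2*b)
      rw [hdm.1, hdm.2, ht]
      have := hii (v % (2*b)) hcase
      omega
    · have hdm := (Nat.div_mod_unique h2b).mpr
        (⟨by omega, by omega⟩ :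
          (v % (2*b) - d) + 2*b*(v / (2*b)) = v - d ∧ v % (2*b) - d < 2*b)
      rw [hdm.1, hdm.2]
      have := hi (v % (2*b)) hcase hrlt
      omega
  interval_cases j
  · exact main 1 (by omega) (by omega) hc1
      (fun r h1 h2 => I1 ha hb h1 h2)
      (fun r h1 => by
        rw [show r = 0 by omega, h_low (by omega), f_small ha (by omega)]
        exact Nat.zero_le _)
  · exact main a (by omega) (by omega) hc2
      (fun r h1 h2 => I2i ha hb hsum hs₀ hH h1 h2)
      (fun r h1 => by
        rw [show 2*b + r - a = 2*b - a + r by omega]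
        exact I2ii ha hb hsum hs₀ hH h1)
  · exact main (2*a) (by omega) (by omega) hc3
      (fun r h1 h2 => I3i ha hb hsum hs₀ hH h1 h2)
      (fun r h1 => by
        rw [show 2*b + r - 2*a = 2*b - 2*a + r by omega]
        exact I3ii ha hb hb' hsum hs₀ hH h1)
  · exact main b (by omega) (by omega) hc4
      (fun r h1 h2 => I4i ha hb h1 h2)
      (fun r h1 => by
        rw [show 2*b + r - b = b + r by omega]
        exact I4ii ha hb h1)
  · exact main (a+b) (by omega) (by omega) hc5
      (fun r h1 h2 => I5i ha hb h1 h2)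
      (fun r h1 => by
        rw [show 2*b + r - (a+b) = b - a + r by omega]
        exact I5ii ha hb hsum hs₀ hH h1)
  · exact main (2*b) (by omega) (by omega) hc6
      (fun r h1 h2 => by omega)
      (fun r h1 => by rw [show 2*b + r - 2*b = r by omega])

include hb' in
lemma grd5_ge3 : 3 ≤ grd 5 c (2*b) := by
  rw [grd_step (j := 5) (Finset.mem_Icc.mpr (by omega)) (by rw [hc5]; omega)
      (by intro i hi hci; rw [Finset.mem_Icc] at hi; obtain ⟨hi1, hi2⟩ := hi; interval_cases i <;>
          simp only [hc1, hc2, hc3, hc4, hc5] at hci ⊢ <;> omega)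
      (by rw [hc5]; omega) (by omega), hc5, show 2*b - (a+b) = b - a by omega]
  rcases Nat.lt_or_ge b (3*a) with hcase | hcase
  · -- b = 3a - 1
    rw [grd_step (j := 2) (Finset.mem_Icc.mpr (by omega)) (by rw [hc2]; omega)
        (by intro i hi hci; rw [Finset.mem_Icc] at hi; obtain ⟨hi1, hi2⟩ := hi; interval_cases i <;>
            simp only [hc1, hc2, hc3, hc4, hc5] at hci ⊢ <;> omega)
        (by rw [hc2]; omega) (by omega), hc2]
    have := grd_pos (n := 5) (c := c) (v := b - a - a) (by omega) hc1 (by omega)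
    omega
  · -- b ≥ 3a + 1
    rw [grd_step (j := 3) (Finset.mem_Icc.mpr (by omega)) (by rw [hc3]; omega)
        (by intro i hi hci; rw [Finset.mem_Icc] at hi; obtain ⟨hi1, hi2⟩ := hi; interval_cases i <;>
            simp only [hc1, hc2, hc3, hc4, hc5] at hci ⊢ <;> omega)
        (by rw [hc3]; omega) (by omega), hc3]
    have := grd_pos (n := 5) (c := c) (v := b - a - 2*a) (by omega) hc1 (by omega)
    omega

lemma opt5_le2 : opt 5 c (2*b) ≤ 2 := by
  refine opt_le (fun i => if i = 4 then 2 else 0) ?_ ?_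
  · unfold IsRepr
    rw [Finset.sum_congr rfl (fun i _ => by
      show c i * (if i = 4 then 2 else 0) = if i = 4 then c i * 2 else 0
      split <;> simp)]
    rw [Finset.sum_ite_eq' (Finset.Icc 1 5) 4 (fun i => c i * 2)]
    rw [if_pos (Finset.mem_Icc.mpr (by omega)), hc4]
    ring
  · rw [Finset.sum_ite_eq' (Finset.Icc 1 5) 4 (fun _ => 2)]
    rw [if_pos (Finset.mem_Icc.mpr (by omega))]

end Spec

end FamC
theorem family_c_canonical (c : ℕ → ℕ) (c2 c4 : ℕ) (h2 : 1 < c2)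
    (h4 : 3 * c2 - 1 ≤ c4) (h4' : c4 ≠ 3 * c2)
    (hc1 : c 1 = 1) (hc2 : c 2 = c2) (hc3 : c 3 = 2 * c2) (hc4 : c 4 = c4)
    (hc5 : c 5 = c2 + c4) (hc6 : c 6 = 2 * c4)
    (ℓ : ℕ) (hℓ : ℓ = (c 5 + c 3 - 1) / c 3)
    (hg : grd 6 c (ℓ * c 3) =
      ℓ * c 3 - c 5 + 1 - ((ℓ * c 3 - c 5) / c 2) * (c 2 - 1))
    (hgl : grd 6 c (ℓ * c 3) ≤ ℓ) :
    Canonical 6 c ∧ ¬ Canonical 5 c := by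

  open FamC in
  have ha : 2 ≤ c2 := h2
  have hb : 3*c2 - 1 ≤ c4 := h4
  have hb' : c4 ≠ 3*c2 := h4'
  rw [hc5, hc3] at hℓ
  have hd := Nat.div_add_mod (c2 + c4 + (2*c2) - 1) (2*c2)
  have hm : (c2 + c4 + (2*c2) - 1) % (2*c2) < 2*c2 := Nat.mod_lt _ (by omega)
  rw [← hℓ] at hd
  set s₀ := 2*c2 - 1 - (c2 + c4 + (2*c2) - 1) % (2*c2) with hs₀def
  have hsum : c2 + c4 + s₀ = 2*c2*ℓ := by omega
  have hs₀ : s₀ < 2*c2 := by omega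
  have hv0lt : 2*c2*ℓ < 2*c4 := by
    rcases Nat.lt_or_ge (2*c2*ℓ) (2*c4) with h | h
    · exact h
    · exfalso
      rcases Nat.lt_or_ge ℓ 3 with hl | hl
      · interval_cases ℓ <;> omega
      · obtain ⟨w, rfl⟩ : ∃ w, ℓ = w + 3 := ⟨ℓ - 3, by omega⟩
        have hr : 2*c2*(w+3) = 2*(c2*w) + 6*c2 := by ring
        omega
  rw [hc3, show ℓ * (2*c2) = 2*c2*ℓ by ring] at hgl
  rw [grd6_eq ha hb hc1 hc2 hc3 hc4 hc5 hc6 (2*c2*ℓ),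
    Nat.div_eq_of_lt hv0lt, Nat.mod_eq_of_lt hv0lt,
    h_top (show c2 + c4 ≤ 2*c2*ℓ by omega),
    show 2*c2*ℓ - (c2+c4) = s₀ by omega] at hgl
  have hH : 1 + FamC.f c2 s₀ ≤ ℓ := by omega
  constructor
  · intro v hv
    refine le_antisymm (opt_le_grd (by norm_num) hc1 v) ?_
    refine grd_le_opt (by norm_num) hc1 ?_
      (exchange6 ha hb hc1 hc2 hc3 hc4 hc5 hc6 hb' hsum hs₀ hH) v
    intro i hi
    rw [Finset.mem_Icc] at hi
    obtain ⟨hi1, hi2⟩ := hi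
    interval_cases i <;> simp only [hc1, hc2, hc3, hc4, hc5, hc6] <;> omega
  · intro hcan
    have hopt := hcan (2*c4) (by omega)
    have hgrd := grd5_ge3 ha hb hb' hc1 hc2 hc3 hc4 hc5 hc6
    have hle := opt5_le2 ha hb hc1 hc2 hc3 hc4 hc5 hc6
    omega
end
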